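/- arXiv:1911.01043 — 7 statements merged into one kernel-verified Lean document; each statement's English description precedes it below -/
import Mathlib

section
/- Let W ∈ ℝ^{m×r}, V ∈ ℝ^{r×n} and b ∈ ℝʳ. For k ∈ {1,…,r} let W_k denote the k-th column of W, and let V_k and b_k denote the k-th row of V and the k-th entry of b. Let N = sup_{x ∈ ℝⁿ} #{ k : V_k x + b_k > 0 } be the maximum number of hidden nodes activated by a single input. Then the two-layer ReLU network f(x) = W (V x + b)_+ is Lipschitz continuous with respect to the Euclidean norms, with Lipschitz constant at most N · max_{k ∈ [r]} ‖W_k‖₂ ‖V_k‖₂. -/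
open Matrix Set Filter Topology
noncomputable def en {n : ℕ} (v : Fin n → ℝ) : ℝ := Real.sqrt (∑ i, (v i) ^ 2)

lemma en_eq_norm {n : ℕ} (v : Fin n → ℝ) :
    en v = ‖(WithLp.equiv 2 (Fin n → ℝ)).symm v‖ := by
  rw [EuclideanSpace.norm_eq]
  simp [en, sq_abs]

/-- A two-layer ReLU network `f x = W (V x + b)₊` is Lipschitz (w.r.t.
Euclidean norms) with constant at most `N · max_k ‖W_k‖₂ ‖V_k‖₂`, where `N` is the maximum
number of hidden nodes activated by a single input, `W_k` is the k-th column of `W` and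
`V_k` the k-th row of `V`. -/
theorem stmt1 {m r n : ℕ} (hr : 0 < r)
    (W : Matrix (Fin m) (Fin r) ℝ) (V : Matrix (Fin r) (Fin n) ℝ) (b : Fin r → ℝ)
    (f : (Fin n → ℝ) → (Fin m → ℝ))
    (hf : ∀ x, f x = W.mulVec (fun k => max (V.mulVec x k + b k) 0))
    (N : ℕ)
    (hN : N = ⨆ x : Fin n → ℝ, (Finset.univ.filter (fun k => 0 < V.mulVec x k + b k)).card) :
    ∀ x y : Fin n → ℝ,
      en (f x - f y) ≤
        (N : ℝ) *
          (Finset.univ.sup' ⟨⟨0, hr⟩, Finset.mem_univ _⟩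
            (fun k : Fin r => en (fun i => W i k) * en (V k))) *
          en (x - y) := by
  intro x y
  set M : ℝ := Finset.univ.sup' ⟨⟨0, hr⟩, Finset.mem_univ _⟩
      (fun k : Fin r => en (fun i => W i k) * en (V k)) with hM
  have hMk : ∀ k : Fin r, en (fun i => W i k) * en (V k) ≤ M := fun k => by
    rw [hM]
    exact Finset.le_sup' (fun k : Fin r => en (fun i => W i k) * en (V k)) (Finset.mem_univ k)
  have hM0 : 0 ≤ M := by
    have h1 := hMk ⟨0, hr⟩
    have h2 : 0 ≤ en (fun i => W i ⟨0, hr⟩) * en (V ⟨0, hr⟩) :=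
      mul_nonneg (Real.sqrt_nonneg _) (Real.sqrt_nonneg _)
    linarith
  -- the data
  set d : Fin n → ℝ := fun j => y j - x j with hdd
  set c : Fin r → ℝ := fun k => ∑ j, V k j * d j with hcc
  set a0 : Fin r → ℝ := fun k => V.mulVec x k + b k with ha0
  set z : ℝ → Fin n → ℝ := fun t j => x j + t * d j with hzz
  have haff : ∀ (k : Fin r) (t : ℝ), V.mulVec (z t) k + b k = a0 k + t * c k := by
    intro k t
    have h1 : ∀ j, V k j * (x j + t * d j) = V k j * x j + t * (V k j * d j) := fun j => by ring
    simp only [ha0, hcc, hzz, Matrix.mulVec, dotProduct, h1, Finset.sum_add_distrib,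
      Finset.mul_sum]
    ring
  -- N bounds activation count everywhere
  have hNbd : ∀ x' : Fin n → ℝ,
      (Finset.univ.filter (fun k => 0 < V.mulVec x' k + b k)).card ≤ N := by
    intro x'
    rw [hN]
    refine le_ciSup (f := fun x' : Fin n → ℝ =>
      (Finset.univ.filter (fun k => 0 < V.mulVec x' k + b k)).card) ⟨r, ?_⟩ x'
    rintro _ ⟨x'', rfl⟩
    exact (Finset.card_filter_le _ _).trans (by simp)
  -- columns of W in Euclidean space
  set Wc : Fin r → EuclideanSpace ℝ (Fin m) :=
    fun k => (WithLp.equiv 2 (Fin m → ℝ)).symm (fun i => W i k) with hWc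
  set G : ℝ → EuclideanSpace ℝ (Fin m) :=
    fun t => ∑ k, max (a0 k + t * c k) 0 • Wc k with hG
  have hfz : ∀ t i, f (z t) i = ∑ k, max (a0 k + t * c k) 0 * W i k := by
    intro t i
    have h0 : f (z t) i = ∑ k, W i k * max (V.mulVec (z t) k + b k) 0 := by rw [hf]; rfl
    rw [h0]
    exact Finset.sum_congr rfl fun k _ => by rw [haff]; ring
  have hGf : ∀ t, G t = (WithLp.equiv 2 (Fin m → ℝ)).symm (f (z t)) := by
    intro t
    ext i
    simp only [hG, hWc, WithLp.ofLp_sum, WithLp.ofLp_smul, Finset.sum_apply, Pi.smul_apply,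
      smul_eq_mul]
    show _ = f (z t) i
    rw [hfz]
    rfl
  -- Cauchy-Schwarz bound on c
  have hcs : ∀ k, |c k| ≤ en (V k) * en d := by
    intro k
    have := abs_real_inner_le_norm ((WithLp.equiv 2 (Fin n → ℝ)).symm (V k))
      ((WithLp.equiv 2 (Fin n → ℝ)).symm d)
    rw [← en_eq_norm, ← en_eq_norm] at this
    simpa [EuclideanSpace.inner_eq_star_dotProduct, dotProduct, hcc, mul_comm] using this
  -- derivative candidate
  set dk : ℝ → Fin r → ℝ := fun t k =>
    if 0 < a0 k + t * c k ∨ (a0 k + t * c k = 0 ∧ 0 < c k) then c k else 0 with hdk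
  set D : ℝ → EuclideanSpace ℝ (Fin m) := fun t => ∑ k, dk t k • Wc k with hD
  have hrelu : ∀ (t : ℝ) (k : Fin r),
      HasDerivWithinAt (fun s : ℝ => max (a0 k + s * c k) 0) (dk t k) (Set.Ici t) t := by
    intro t k
    have hcontk : Continuous (fun s : ℝ => a0 k + s * c k) := by fun_prop
    have base : HasDerivWithinAt (fun s : ℝ => a0 k + s * c k) (c k) (Set.Ici t) t := by
      simpa using (((hasDerivAt_id t).mul_const (c k)).const_add (a0 k)).hasDerivWithinAt
    rcases lt_trichotomy (a0 k + t * c k) 0 with hA | hA | hA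
    · -- negative at t : derivative 0
      have hdk0 : dk t k = 0 := by
        rw [hdk]; simp only
        rw [if_neg]; push_neg
        exact ⟨by linarith, fun h => absurd h (by linarith)⟩
      rw [hdk0]
      have hev : ∀ᶠ s in 𝓝[Set.Ici t] t, max (a0 k + s * c k) 0 = 0 := by
        have h1 : ∀ᶠ s in 𝓝 t, a0 k + s * c k < 0 :=
          (hcontk.continuousAt (x := t)).eventually_lt_const hA
        filter_upwards [h1.filter_mono nhdsWithin_le_nhds] with s hs
        exact max_eq_right hs.le
      exact ((hasDerivWithinAt_const t (Set.Ici t) (0:ℝ)).congr_of_eventuallyEq hev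
        (max_eq_right hA.le))
    · -- zero at t
      by_cases hc : 0 < c k
      · have hdk0 : dk t k = c k := by rw [hdk]; simp only; rw [if_pos (Or.inr ⟨hA, hc⟩)]
        rw [hdk0]
        refine base.congr (fun s hs => max_eq_left ?_) (max_eq_left hA.ge)
        have hst : t ≤ s := hs
        nlinarith
      · have hdk0 : dk t k = 0 := by
          rw [hdk]; simp only
          rw [if_neg]; push_neg
          exact ⟨by linarith, fun _ => le_of_not_gt hc⟩
        rw [hdk0]
        refine (hasDerivWithinAt_const t (Set.Ici t) (0:ℝ)).congr
          (fun s hs => max_eq_right ?_) (max_eq_right hA.le)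
        have hst : t ≤ s := hs
        have hc' : c k ≤ 0 := le_of_not_gt hc
        nlinarith
    · -- positive at t : derivative c k
      have hdk0 : dk t k = c k := by rw [hdk]; simp only; rw [if_pos (Or.inl hA)]
      rw [hdk0]
      have hev : ∀ᶠ s in 𝓝[Set.Ici t] t, max (a0 k + s * c k) 0 = a0 k + s * c k := by
        have h1 : ∀ᶠ s in 𝓝 t, 0 < a0 k + s * c k :=
          (hcontk.continuousAt (x := t)).eventually_const_lt hA
        filter_upwards [h1.filter_mono nhdsWithin_le_nhds] with s hs
        exact max_eq_left hs.le
      exact base.congr_of_eventuallyEq hev (max_eq_left hA.le)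
  -- G has right derivative D t at every t
  have hderiv : ∀ t : ℝ, HasDerivWithinAt G (D t) (Set.Ici t) t := by
    intro t
    rw [hD]
    exact HasDerivWithinAt.fun_sum fun k _ => (hrelu t k).smul_const (Wc k)
  -- bound on the derivative
  have hbound : ∀ t : ℝ, ‖D t‖ ≤ (N : ℝ) * M * en d := by
    intro t
    set S : Finset (Fin r) :=
      Finset.univ.filter (fun k => 0 < a0 k + t * c k ∨ (a0 k + t * c k = 0 ∧ 0 < c k)) with hS
    have hDS : D t = ∑ k ∈ S, c k • Wc k := by
      rw [hD, hS, Finset.sum_filter]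
      exact Finset.sum_congr rfl fun k _ => by
        rw [hdk]; simp only
        split <;> simp
    have hcard : (S.card : ℝ) ≤ N := by
      have hev : ∀ᶠ s in 𝓝[>] t, ∀ k ∈ S, 0 < a0 k + s * c k := by
        rw [Filter.eventually_all_finset]
        intro k hk
        rcases (Finset.mem_filter.mp hk).2 with h | ⟨h0, hcpos⟩
        · have hcontk : Continuous (fun s : ℝ => a0 k + s * c k) := by fun_prop
          exact ((hcontk.continuousAt (x := t)).eventually_const_lt h).filter_mono
            nhdsWithin_le_nhds
        · filter_upwards [self_mem_nhdsWithin] with s hs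
          have hts : t < s := hs
          have : a0 k + s * c k = (s - t) * c k + (a0 k + t * c k) := by ring
          rw [this, h0, add_zero]
          exact mul_pos (by linarith) hcpos
      obtain ⟨s, hs⟩ := hev.exists
      have hsub : S ⊆ Finset.univ.filter (fun k => 0 < V.mulVec (z s) k + b k) := by
        intro k hk
        refine Finset.mem_filter.mpr ⟨Finset.mem_univ _, ?_⟩
        rw [haff]
        exact hs k hk
      exact_mod_cast (Finset.card_le_card hsub).trans (hNbd (z s))
    have hterm : ∀ k ∈ S, ‖c k • Wc k‖ ≤ M * en d := by
      intro k _
      rw [norm_smul, Real.norm_eq_abs]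
      have h1 : ‖Wc k‖ = en (fun i => W i k) := by rw [hWc]; exact (en_eq_norm _).symm
      rw [h1]
      calc |c k| * en (fun i => W i k)
          ≤ (en (V k) * en d) * en (fun i => W i k) := by
            apply mul_le_mul_of_nonneg_right (hcs k) (Real.sqrt_nonneg _)
        _ = (en (fun i => W i k) * en (V k)) * en d := by ring
        _ ≤ M * en d := mul_le_mul_of_nonneg_right (hMk k) (Real.sqrt_nonneg _)
    calc ‖D t‖ ≤ ∑ k ∈ S, ‖c k • Wc k‖ := by rw [hDS]; exact norm_sum_le _ _
      _ ≤ S.card • (M * en d) := Finset.sum_le_card_nsmul S _ _ hterm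
      _ = (S.card : ℝ) * (M * en d) := by rw [nsmul_eq_mul]
      _ ≤ (N : ℝ) * (M * en d) := by
          apply mul_le_mul_of_nonneg_right hcard
          exact mul_nonneg hM0 (Real.sqrt_nonneg _)
      _ = (N : ℝ) * M * en d := by ring
  -- continuity of G
  have hcont : Continuous G := by
    rw [hG]
    refine continuous_finset_sum _ fun k _ => ?_
    exact ((continuous_const.add (continuous_id.mul continuous_const)).max
      continuous_const).smul continuous_const
  -- mean value inequality with right derivatives
  have key := norm_image_sub_le_of_norm_deriv_right_le_segment (f := G) (f' := D)
    (a := 0) (b := 1) (hcont.continuousOn)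
    (fun t _ => hderiv t) (fun t _ => hbound t) 1 (Set.right_mem_Icc.mpr zero_le_one)
  -- assemble
  have hz0 : z 0 = x := by funext j; simp [hzz]
  have hz1 : z 1 = y := by funext j; simp [hzz, hdd]
  have hfin : en (f x - f y) = ‖G 1 - G 0‖ := by
    rw [en_eq_norm, ← norm_sub_rev]
    congr 1
    rw [hGf 0, hGf 1, hz0, hz1]
    rfl
  have hend : en d = en (x - y) := by
    rw [hdd]
    unfold en
    congr 1
    exact Finset.sum_congr rfl fun j _ => by simp [Pi.sub_apply]; ring
  rw [hfin, ← hend]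
  calc ‖G 1 - G 0‖ ≤ ((N : ℝ) * M * en d) * (1 - 0) := key
    _ = (N : ℝ) * M * en d := by ring
end

section
/- Let w̄ ∈ ℝʳ, V̄ ∈ ℝ^{r×n}, b̄ ∈ ℝʳ, let {x_s}_{s∈S} be a finite set of points in ℝⁿ with labels σ_s ∈ {+1, −1} and nonnegative scalars {μ_s}_{s∈S}. For each s ∈ S let G_s be the diagonal r×r matrix with (G_s)_{kk} = 1 if V̄_k x_s + b̄_k > 0 and 0 otherwise, where V̄_k and b̄_k are the k-th row of V̄ and entry of b̄. Assume: (a) w̄ = Σ_s σ_s μ_s G_s (V̄ x_s + b̄), (b) V̄ = Σ_s σ_s μ_s G_s w̄ x_sᵀ, (c) b̄ = Σ_s σ_s μ_s G_s w̄, and (d) σ_s · w̄ᵀ (V̄ x_s + b̄)_+ = 1 for every s ∈ S. For k ∈ [r] let S_k = { s ∈ S : V̄_k x_s + b̄_k > 0 }, let X_k be the matrix whose columns are {σ_s x_s}_{s∈S_k}, let n_sup = max_{k} |S_k|, let λ̲ = min over k with S_k ≠ ∅ of λ_min(X_kᵀ X_k), assumed strictly positive, and let n_node be the minimum cardinality of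 a set K ⊆ [r] such that every s ∈ S belongs to S_k for some k ∈ K. Then the map x ↦ w̄ᵀ (V̄ x + b̄)_+ is Lipschitz with respect to the Euclidean norm with constant at most n_node · √(n_sup) / √(λ̲). -/
open Matrix

/-- Smallest eigenvalue of a symmetric real matrix (junk value `0` if not symmetric). -/
noncomputable def lamMin {ι : Type*} [Fintype ι] [DecidableEq ι] (S : Matrix ι ι ℝ) : ℝ :=
  if h : S.IsHermitian then ⨅ i, h.eigenvalues i else 0

lemma rayleigh_min {m : Type*} [Fintype m] [DecidableEq m] (A : Matrix m m ℝ)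
    (hA : A.IsHermitian) (v : m → ℝ) :
    (⨅ i, hA.eigenvalues i) * (∑ i, v i ^ 2) ≤ v ⬝ᵥ (A *ᵥ v) := by
  cases isEmpty_or_nonempty m with
  | inl h => simp [dotProduct]
  | inr h =>
    set U : Matrix m m ℝ := (hA.eigenvectorUnitary : Matrix m m ℝ) with hU
    set c : m → ℝ := star U *ᵥ v with hc
    have hsU : star U = Uᵀ := rfl
    have h1 : v ⬝ᵥ (A *ᵥ v) = ∑ i, hA.eigenvalues i * c i ^ 2 := by
      conv_lhs => rw [hA.spectral_theorem]
      rw [Unitary.conjStarAlgAut_apply]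
      rw [← Matrix.mulVec_mulVec, ← Matrix.mulVec_mulVec, Matrix.dotProduct_mulVec]
      have hvU : v ᵥ* U = c := by rw [hc, hsU, Matrix.mulVec_transpose]
      rw [hvU]
      simp [dotProduct, Matrix.mulVec_diagonal]
      exact Finset.sum_congr rfl fun x _ => by ring
    have h2 : ∑ i, c i ^ 2 = ∑ i, v i ^ 2 := by
      have : c ⬝ᵥ c = v ⬝ᵥ v := by
        rw [hc, Matrix.dotProduct_mulVec, hsU, ← Matrix.mulVec_transpose,
          Matrix.mulVec_mulVec]
        have : Uᵀᵀ * Uᵀ = 1 := by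
          rw [Matrix.transpose_transpose, ← hsU]
          exact (Unitary.mem_iff.mp hA.eigenvectorUnitary.2).2
        rw [this, Matrix.one_mulVec]
      simpa [dotProduct, sq] using this
    rw [h1, ← h2, Finset.mul_sum]
    apply Finset.sum_le_sum
    intro i _
    have : (⨅ j, hA.eigenvalues j) ≤ hA.eigenvalues i :=
      ciInf_le (Finite.bddBelow_range _) i
    exact mul_le_mul_of_nonneg_right this (sq_nonneg _)

lemma ite_eq_max (t : ℝ) : (if 0 < t then t else 0) = max t 0 := by
  split_ifs with h
  · exact (max_eq_left h.le).symm
  · exact (max_eq_right (not_lt.mp h)).symm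


/-- deterministic content of Theorem 3.  Under the stationarity
representation (a)–(c) with nonnegative multipliers `μ_s`, labels `σ_s ∈ {±1}`, frozen
activation patterns, and the support-vector condition (d), the two-layer ReLU classifier
`x ↦ w̄ᵀ (V̄ x + b̄)₊` is Lipschitz with constant at most `n_node √n_sup / √λ̲`. -/
theorem stmt7 {r n : ℕ} {ι : Type*} [Fintype ι] [DecidableEq ι]
    (wb : Fin r → ℝ) (Vb : Matrix (Fin r) (Fin n) ℝ) (bb : Fin r → ℝ)
    (x : ι → Fin n → ℝ) (σ : ι → ℝ) (hσ : ∀ s, σ s = 1 ∨ σ s = -1)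
    (μ : ι → ℝ) (hμ : ∀ s, 0 ≤ μ s)
    -- (a)
    (ha : ∀ k, wb k =
      ∑ s, σ s * μ s * (if 0 < Vb k ⬝ᵥ x s + bb k then Vb k ⬝ᵥ x s + bb k else 0))
    -- (b)
    (hbV : ∀ k a, Vb k a =
      ∑ s, σ s * μ s * (if 0 < Vb k ⬝ᵥ x s + bb k then wb k else 0) * x s a)
    -- (c)
    (hcb : ∀ k, bb k = ∑ s, σ s * μ s * (if 0 < Vb k ⬝ᵥ x s + bb k then wb k else 0))
    -- (d): every point is a support vector attaining margin exactly 1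
    (hd : ∀ s, σ s * (∑ k, wb k * max (Vb k ⬝ᵥ x s + bb k) 0) = 1)
    -- support vectors activating node k
    (Sk : Fin r → Finset ι)
    (hSk : ∀ k, Sk k = Finset.univ.filter (fun s => 0 < Vb k ⬝ᵥ x s + bb k))
    -- `n_sup`, `λ̲`, `n_node`
    (nsup : ℕ) (hnsup : nsup = Finset.univ.sup (fun k => (Sk k).card))
    (lam : ℝ)
    (hlam : lam = sInf ((fun k : Fin r => lamMin
        (Matrix.of (fun s t : {i // i ∈ Sk k} =>
          ∑ a, (σ s.1 * x s.1 a) * (σ t.1 * x t.1 a)))) '' {k | (Sk k).Nonempty}))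
    (hlampos : 0 < lam)
    (nnode : ℕ)
    (hnnode : nnode = sInf {c : ℕ | ∃ Kset : Finset (Fin r),
        Kset.card = c ∧ ∀ s : ι, ∃ k ∈ Kset, s ∈ Sk k}) :
    ∀ z y : Fin n → ℝ,
      |(∑ k, wb k * max (Vb k ⬝ᵥ z + bb k) 0) - ∑ k, wb k * max (Vb k ⬝ᵥ y + bb k) 0| ≤
        ((nnode : ℝ) * Real.sqrt nsup / Real.sqrt lam) * en (z - y) := by
  intro z y
  -- Step A : balancedness  ‖V_k‖² + b_k² = w_k²
  have hA : ∀ k, (∑ a, Vb k a ^ 2) + bb k ^ 2 = wb k * wb k := by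
    intro k
    have e1 : ∑ a, Vb k a ^ 2 =
        ∑ s, σ s * μ s * (if 0 < Vb k ⬝ᵥ x s + bb k then wb k else 0) * (Vb k ⬝ᵥ x s) := by
      calc ∑ a, Vb k a ^ 2
          = ∑ a, ∑ s, σ s * μ s * (if 0 < Vb k ⬝ᵥ x s + bb k then wb k else 0) * x s a
              * Vb k a := by
            refine Finset.sum_congr rfl fun a _ => ?_
            rw [pow_two]
            nth_rewrite 1 [hbV k a]
            rw [Finset.sum_mul]
        _ = ∑ s, ∑ a, σ s * μ s * (if 0 < Vb k ⬝ᵥ x s + bb k then wb k else 0) * x s a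
              * Vb k a := Finset.sum_comm
        _ = _ := by
            refine Finset.sum_congr rfl fun s _ => ?_
            rw [dotProduct, Finset.mul_sum]
            exact Finset.sum_congr rfl fun a _ => by ring
    have e2 : bb k ^ 2 =
        ∑ s, σ s * μ s * (if 0 < Vb k ⬝ᵥ x s + bb k then wb k else 0) * bb k := by
      rw [pow_two]
      nth_rewrite 1 [hcb k]
      rw [Finset.sum_mul]
    have e3 : wb k * wb k =
        ∑ s, σ s * μ s * (if 0 < Vb k ⬝ᵥ x s + bb k then Vb k ⬝ᵥ x s + bb k else 0)
          * wb k := by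
      nth_rewrite 1 [ha k]
      rw [Finset.sum_mul]
    rw [e1, e2, e3, ← Finset.sum_add_distrib]
    refine Finset.sum_congr rfl fun s _ => ?_
    split_ifs <;> ring
  -- consequence : ‖V_k‖² ≤ w_k²
  have hVle : ∀ k, (∑ a, Vb k a ^ 2) ≤ wb k * wb k := fun k => by
    have := hA k; nlinarith [sq_nonneg (bb k)]
  -- Step B : ∑ w_k² = ∑ μ_s
  have hsum : ∑ k, wb k * wb k = ∑ s, μ s := by
    have e : ∀ k, wb k * wb k =
        ∑ s, wb k * (σ s * μ s * (if 0 < Vb k ⬝ᵥ x s + bb k then Vb k ⬝ᵥ x s + bb k else 0)) := by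
      intro k
      nth_rewrite 2 [ha k]
      rw [Finset.mul_sum]
    calc ∑ k, wb k * wb k
        = ∑ k, ∑ s, wb k * (σ s * μ s *
            (if 0 < Vb k ⬝ᵥ x s + bb k then Vb k ⬝ᵥ x s + bb k else 0)) :=
          Finset.sum_congr rfl fun k _ => e k
      _ = ∑ s, ∑ k, wb k * (σ s * μ s *
            (if 0 < Vb k ⬝ᵥ x s + bb k then Vb k ⬝ᵥ x s + bb k else 0)) := Finset.sum_comm
      _ = ∑ s, μ s * (σ s * ∑ k, wb k * max (Vb k ⬝ᵥ x s + bb k) 0) := by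
          refine Finset.sum_congr rfl fun s _ => ?_
          rw [Finset.mul_sum, Finset.mul_sum]
          refine Finset.sum_congr rfl fun k _ => ?_
          rw [← ite_eq_max]
          split_ifs <;> ring
      _ = ∑ s, μ s := by
          refine Finset.sum_congr rfl fun s _ => ?_
          rw [hd s, mul_one]
  -- every point activates some node
  have hact : ∀ s, ∃ k, s ∈ Sk k := by
    intro s
    by_contra hno
    push_neg at hno
    have hz : ∀ k, ¬ (0 < Vb k ⬝ᵥ x s + bb k) := by
      intro k hk
      exact hno k (by rw [hSk k]; simp [hk])
    have : (∑ k, wb k * max (Vb k ⬝ᵥ x s + bb k) 0) = 0 := by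
      refine Finset.sum_eq_zero fun k _ => ?_
      rw [max_eq_right (not_lt.mp (hz k)), mul_zero]
    have h1 := hd s
    rw [this, mul_zero] at h1
    exact zero_ne_one h1
  -- obtain a minimal covering set
  have hKne : {c : ℕ | ∃ Kset : Finset (Fin r),
      Kset.card = c ∧ ∀ s : ι, ∃ k ∈ Kset, s ∈ Sk k}.Nonempty := by
    refine ⟨(Finset.univ : Finset (Fin r)).card, Finset.univ, rfl, fun s => ?_⟩
    obtain ⟨k, hk⟩ := hact s
    exact ⟨k, Finset.mem_univ k, hk⟩
  obtain ⟨Kset, hKcard, hKcover⟩ :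
      ∃ Kset : Finset (Fin r), Kset.card = nnode ∧ ∀ s : ι, ∃ k ∈ Kset, s ∈ Sk k := by
    have := Nat.sInf_mem hKne
    rw [← hnnode] at this
    exact this
  -- Step D : per-node sum of multipliers
  have hnode : ∀ k, ∑ s ∈ Sk k, μ s ≤ Real.sqrt nsup / Real.sqrt lam := by
    intro k
    rcases (Sk k).eq_empty_or_nonempty with hemp | hne
    · rw [hemp, Finset.sum_empty]
      exact div_nonneg (Real.sqrt_nonneg _) (Real.sqrt_nonneg _)
    · obtain ⟨s0, hs0⟩ := hne
      have hs0' : 0 < Vb k ⬝ᵥ x s0 + bb k := by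
        rw [hSk k, Finset.mem_filter] at hs0
        exact hs0.2
      have hwk : wb k ≠ 0 := by
        intro h0
        have h1 := hA k
        rw [h0, mul_zero] at h1
        have hV0 : ∀ a, Vb k a = 0 := by
          intro a
          have hsq : ∑ a, Vb k a ^ 2 = 0 := by nlinarith [Finset.sum_nonneg (fun a (_ : a ∈ Finset.univ) => sq_nonneg (Vb k a)), sq_nonneg (bb k)]
          have := (Finset.sum_eq_zero_iff_of_nonneg
            (fun a (_ : a ∈ Finset.univ) => sq_nonneg (Vb k a))).mp hsq a (Finset.mem_univ a)
          exact (pow_eq_zero_iff two_ne_zero).mp this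
        have hb0 : bb k = 0 := by
          have : bb k ^ 2 = 0 := by nlinarith [Finset.sum_nonneg (fun a (_ : a ∈ Finset.univ) => sq_nonneg (Vb k a))]
          exact (pow_eq_zero_iff two_ne_zero).mp this
        have : Vb k ⬝ᵥ x s0 = 0 := by
          rw [dotProduct]
          exact Finset.sum_eq_zero fun a _ => by rw [hV0 a, zero_mul]
        rw [this, hb0, add_zero] at hs0'
        exact lt_irrefl 0 hs0'
      have hwk2 : 0 < wb k * wb k := mul_self_pos.mpr hwk
      -- the Gram matrix
      set G : Matrix {i // i ∈ Sk k} {i // i ∈ Sk k} ℝ :=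
        Matrix.of (fun s t : {i // i ∈ Sk k} =>
          ∑ a, (σ s.1 * x s.1 a) * (σ t.1 * x t.1 a)) with hG
      have hherm : G.IsHermitian := by
        rw [Matrix.IsHermitian]
        ext s t
        simp only [Matrix.conjTranspose_apply, Matrix.of_apply, star_trivial, hG]
        exact Finset.sum_congr rfl fun a _ => mul_comm _ _
      have hlamle : lam ≤ lamMin G := by
        rw [hlam]
        refine csInf_le ((Set.toFinite _).bddBelow) ?_
        exact ⟨k, ⟨s0, hs0⟩, rfl⟩
      -- the restricted multipliers
      set v : {i // i ∈ Sk k} → ℝ := fun s => μ s.1 with hv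
      -- rows of V in terms of the multipliers
      have hVa : ∀ a, Vb k a = wb k * ∑ s ∈ Sk k, σ s * μ s * x s a := by
        intro a
        rw [hbV k a, hSk k, Finset.sum_filter, Finset.mul_sum]
        refine Finset.sum_congr rfl fun s _ => ?_
        split_ifs <;> ring
      -- quadratic form value
      have hq : (wb k * wb k) * (v ⬝ᵥ (G *ᵥ v)) = ∑ a, Vb k a ^ 2 := by
        have hqq : v ⬝ᵥ (G *ᵥ v) = ∑ a, (∑ s ∈ Sk k, σ s * μ s * x s a) ^ 2 := by
          have hrs : ∀ a : Fin n, ∑ s ∈ Sk k, σ s * μ s * x s a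
              = ∑ s : {i // i ∈ Sk k}, σ s.1 * μ s.1 * x s.1 a :=
            fun a => (Finset.sum_coe_sort _ _).symm
          calc v ⬝ᵥ (G *ᵥ v)
              = ∑ s : {i // i ∈ Sk k}, ∑ t : {i // i ∈ Sk k}, ∑ a,
                  (σ s.1 * μ s.1 * x s.1 a) * (σ t.1 * μ t.1 * x t.1 a) := by
                simp only [dotProduct, Matrix.mulVec, Matrix.of_apply, hG, hv]
                refine Finset.sum_congr rfl fun s _ => ?_
                rw [Finset.mul_sum]
                refine Finset.sum_congr rfl fun t _ => ?_
                rw [Finset.sum_mul, Finset.mul_sum]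
                exact Finset.sum_congr rfl fun a _ => by ring
            _ = ∑ a, ∑ s : {i // i ∈ Sk k}, ∑ t : {i // i ∈ Sk k},
                  (σ s.1 * μ s.1 * x s.1 a) * (σ t.1 * μ t.1 * x t.1 a) := by
                rw [show (∑ s : {i // i ∈ Sk k}, ∑ t : {i // i ∈ Sk k}, ∑ a,
                    (σ s.1 * μ s.1 * x s.1 a) * (σ t.1 * μ t.1 * x t.1 a))
                  = ∑ s : {i // i ∈ Sk k}, ∑ a, ∑ t : {i // i ∈ Sk k},
                    (σ s.1 * μ s.1 * x s.1 a) * (σ t.1 * μ t.1 * x t.1 a) from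
                  Finset.sum_congr rfl fun s _ => Finset.sum_comm]
                exact Finset.sum_comm
            _ = ∑ a, (∑ s ∈ Sk k, σ s * μ s * x s a) ^ 2 := by
                refine Finset.sum_congr rfl fun a _ => ?_
                rw [pow_two, hrs a, Finset.sum_mul_sum]
        rw [hqq, Finset.mul_sum]
        refine Finset.sum_congr rfl fun a _ => ?_
        rw [hVa a]; ring
      have hqle : v ⬝ᵥ (G *ᵥ v) ≤ 1 := by
        rw [← mul_le_mul_iff_right₀ hwk2, mul_one, hq]
        exact hVle k
      have hmusq : lam * ∑ s ∈ Sk k, μ s ^ 2 ≤ 1 := by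
        have hray := rayleigh_min G hherm v
        have hlm : lamMin G = ⨅ i, hherm.eigenvalues i := by
          rw [lamMin, dif_pos hherm]
        have hsub : ∑ i : {i // i ∈ Sk k}, v i ^ 2 = ∑ s ∈ Sk k, μ s ^ 2 := by
          rw [← Finset.sum_coe_sort (Sk k) (fun s => μ s ^ 2)]
        have h1 : lam * ∑ s ∈ Sk k, μ s ^ 2 ≤ lamMin G * ∑ s ∈ Sk k, μ s ^ 2 := by
          refine mul_le_mul_of_nonneg_right hlamle ?_
          exact Finset.sum_nonneg fun s _ => sq_nonneg _
        calc lam * ∑ s ∈ Sk k, μ s ^ 2 ≤ lamMin G * ∑ s ∈ Sk k, μ s ^ 2 := h1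
          _ = (⨅ i, hherm.eigenvalues i) * ∑ i : {i // i ∈ Sk k}, v i ^ 2 := by
              rw [hlm, hsub]
          _ ≤ v ⬝ᵥ (G *ᵥ v) := hray
          _ ≤ 1 := hqle
      -- Cauchy–Schwarz
      have hcs : (∑ s ∈ Sk k, μ s) ^ 2 ≤ (nsup : ℝ) / lam := by
        have h1 : (∑ s ∈ Sk k, (1 : ℝ) * μ s) ^ 2 ≤
            (∑ s ∈ Sk k, (1:ℝ) ^ 2) * ∑ s ∈ Sk k, μ s ^ 2 :=
          Finset.sum_mul_sq_le_sq_mul_sq (Sk k) _ _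
        simp only [one_mul, one_pow, Finset.sum_const, nsmul_eq_mul, mul_one] at h1
        have hcard : ((Sk k).card : ℝ) ≤ (nsup : ℝ) := by
          exact_mod_cast Nat.cast_le.mpr (hnsup ▸ Finset.le_sup (Finset.mem_univ k))
        have hμ2 : ∑ s ∈ Sk k, μ s ^ 2 ≤ 1 / lam := by
          rw [le_div_iff₀ hlampos]
          linarith [hmusq]
        calc (∑ s ∈ Sk k, μ s) ^ 2 ≤ ((Sk k).card : ℝ) * ∑ s ∈ Sk k, μ s ^ 2 := h1
          _ ≤ (nsup : ℝ) * (1 / lam) := by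
              refine mul_le_mul hcard hμ2 (Finset.sum_nonneg fun s _ => sq_nonneg _) ?_
              exact Nat.cast_nonneg _
          _ = (nsup : ℝ) / lam := by ring
      have hμpos : 0 ≤ ∑ s ∈ Sk k, μ s := Finset.sum_nonneg fun s _ => hμ s
      calc ∑ s ∈ Sk k, μ s = Real.sqrt ((∑ s ∈ Sk k, μ s) ^ 2) := (Real.sqrt_sq hμpos).symm
        _ ≤ Real.sqrt ((nsup : ℝ) / lam) := Real.sqrt_le_sqrt hcs
        _ = Real.sqrt nsup / Real.sqrt lam := Real.sqrt_div (Nat.cast_nonneg _) _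
  -- Step E : total multiplier bound
  have hμtot : ∑ s, μ s ≤ (nnode : ℝ) * (Real.sqrt nsup / Real.sqrt lam) := by
    have h1 : ∑ s, μ s ≤ ∑ s, ∑ k ∈ Kset, (if s ∈ Sk k then μ s else 0) := by
      refine Finset.sum_le_sum fun s _ => ?_
      obtain ⟨k0, hk0K, hk0⟩ := hKcover s
      have := Finset.single_le_sum
        (f := fun k => if s ∈ Sk k then μ s else 0)
        (fun k _ => by by_cases h : s ∈ Sk k <;> simp [h, hμ s]) hk0K
      simpa [hk0] using this
    have h2 : ∑ s, ∑ k ∈ Kset, (if s ∈ Sk k then μ s else 0)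
        = ∑ k ∈ Kset, ∑ s ∈ Sk k, μ s := by
      rw [Finset.sum_comm]
      refine Finset.sum_congr rfl fun k _ => ?_
      rw [Finset.sum_ite_mem, Finset.univ_inter]
    have h3 : ∑ k ∈ Kset, ∑ s ∈ Sk k, μ s ≤
        Kset.card • (Real.sqrt nsup / Real.sqrt lam) :=
      Finset.sum_le_card_nsmul _ _ _ fun k _ => hnode k
    rw [hKcard, nsmul_eq_mul] at h3
    linarith
  -- Step F : the Lipschitz estimate
  have hend : 0 ≤ en (z - y) := Real.sqrt_nonneg _
  have hperk : ∀ k, |wb k * max (Vb k ⬝ᵥ z + bb k) 0 - wb k * max (Vb k ⬝ᵥ y + bb k) 0|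
      ≤ (wb k * wb k) * en (z - y) := by
    intro k
    rw [← mul_sub, abs_mul]
    have h1 : |max (Vb k ⬝ᵥ z + bb k) 0 - max (Vb k ⬝ᵥ y + bb k) 0| ≤
        |Vb k ⬝ᵥ (z - y)| := by
      have := abs_max_sub_max_le_abs (Vb k ⬝ᵥ z + bb k) (Vb k ⬝ᵥ y + bb k) 0
      have heq : Vb k ⬝ᵥ z + bb k - (Vb k ⬝ᵥ y + bb k) = Vb k ⬝ᵥ (z - y) := by
        rw [dotProduct_sub]; ring
      rwa [heq] at this
    have h2 : |Vb k ⬝ᵥ (z - y)| ≤ |wb k| * en (z - y) := by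
      have hcs : (Vb k ⬝ᵥ (z - y)) ^ 2 ≤ (∑ a, Vb k a ^ 2) * ∑ a, (z - y) a ^ 2 := by
        exact Finset.sum_mul_sq_le_sq_mul_sq Finset.univ _ _
      have h3 : (Vb k ⬝ᵥ (z - y)) ^ 2 ≤ (wb k * wb k) * ∑ a, (z - y) a ^ 2 := by
        refine hcs.trans (mul_le_mul_of_nonneg_right (hVle k) ?_)
        exact Finset.sum_nonneg fun a _ => sq_nonneg _
      have := Real.sqrt_le_sqrt h3
      rw [Real.sqrt_sq_eq_abs] at this
      calc |Vb k ⬝ᵥ (z - y)| ≤ Real.sqrt ((wb k * wb k) * ∑ a, (z - y) a ^ 2) := this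
        _ = |wb k| * en (z - y) := by
            rw [Real.sqrt_mul (mul_self_nonneg _), Real.sqrt_mul_self_eq_abs, en]
    calc |wb k| * |max (Vb k ⬝ᵥ z + bb k) 0 - max (Vb k ⬝ᵥ y + bb k) 0|
        ≤ |wb k| * (|wb k| * en (z - y)) :=
          mul_le_mul_of_nonneg_left (h1.trans h2) (abs_nonneg _)
      _ = (wb k * wb k) * en (z - y) := by
          rw [← mul_assoc, abs_mul_abs_self]
  calc |(∑ k, wb k * max (Vb k ⬝ᵥ z + bb k) 0) - ∑ k, wb k * max (Vb k ⬝ᵥ y + bb k) 0|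
      = |∑ k, (wb k * max (Vb k ⬝ᵥ z + bb k) 0 - wb k * max (Vb k ⬝ᵥ y + bb k) 0)| := by
        rw [Finset.sum_sub_distrib]
    _ ≤ ∑ k, |wb k * max (Vb k ⬝ᵥ z + bb k) 0 - wb k * max (Vb k ⬝ᵥ y + bb k) 0| :=
        Finset.abs_sum_le_sum_abs _ _
    _ ≤ ∑ k, (wb k * wb k) * en (z - y) := Finset.sum_le_sum fun k _ => hperk k
    _ = (∑ s, μ s) * en (z - y) := by rw [← Finset.sum_mul, hsum]
    _ ≤ ((nnode : ℝ) * Real.sqrt nsup / Real.sqrt lam) * en (z - y) := by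
        refine mul_le_mul_of_nonneg_right ?_ hend
        rw [mul_div_assoc]
        exact hμtot
end

section
/- Under hypotheses (a)–(d) of the stationarity representation — w̄ = Σ_s σ_s μ_s G_s (V̄ x_s + b̄), V̄ = Σ_s σ_s μ_s G_s w̄ x_sᵀ, b̄ = Σ_s σ_s μ_s G_s w̄ with μ_s ≥ 0, σ_s ∈ {+1, −1}, G_s the diagonal 0/1 activation matrix of x_s, and σ_s · w̄ᵀ (V̄ x_s + b̄)_+ = 1 for all s — the following identities hold: for every k ∈ [r], w̄_k² = ‖V̄_k‖₂² + b̄_k², and Σ_{k∈[r]} w̄_k² = Σ_{s∈S} μ_s. -/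
open Matrix

/-- Under the stationarity representation (a)–(c) with nonnegative
multipliers, ±1 labels and the support-vector condition (d), one has the per-node norm
balance `w̄_k² = ‖V̄_k‖₂² + b̄_k²` for every `k`, and `Σ_k w̄_k² = Σ_s μ_s`. -/
theorem stmt8 {r n : ℕ} {ι : Type*} [Fintype ι]
    (wb : Fin r → ℝ) (Vb : Matrix (Fin r) (Fin n) ℝ) (bb : Fin r → ℝ)
    (x : ι → Fin n → ℝ) (σ : ι → ℝ) (hσ : ∀ s, σ s = 1 ∨ σ s = -1)
    (μ : ι → ℝ) (hμ : ∀ s, 0 ≤ μ s)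
    -- (a)
    (ha : ∀ k, wb k =
      ∑ s, σ s * μ s * (if 0 < Vb k ⬝ᵥ x s + bb k then Vb k ⬝ᵥ x s + bb k else 0))
    -- (b)
    (hbV : ∀ k a, Vb k a =
      ∑ s, σ s * μ s * (if 0 < Vb k ⬝ᵥ x s + bb k then wb k else 0) * x s a)
    -- (c)
    (hcb : ∀ k, bb k = ∑ s, σ s * μ s * (if 0 < Vb k ⬝ᵥ x s + bb k then wb k else 0))
    -- (d)
    (hd : ∀ s, σ s * (∑ k, wb k * max (Vb k ⬝ᵥ x s + bb k) 0) = 1) :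
    (∀ k, (wb k) ^ 2 = (∑ a, (Vb k a) ^ 2) + (bb k) ^ 2) ∧
    (∑ k, (wb k) ^ 2) = ∑ s, μ s := by
  have hmax : ∀ (t : ℝ), max t 0 = if 0 < t then t else 0 := by
    intro t
    rcases lt_trichotomy 0 t with h | h | h
    · simp [max_eq_left h.le, h]
    · simp [← h]
    · simp [max_eq_right h.le, not_lt.mpr h.le, h.not_gt]
  -- per-node identity
  have h1 : ∀ k, (wb k) ^ 2 = (∑ a, (Vb k a) ^ 2) + (bb k) ^ 2 := by
    intro k
    have hV : ∑ a, (Vb k a) ^ 2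
        = ∑ s, σ s * μ s * (if 0 < Vb k ⬝ᵥ x s + bb k then wb k else 0)
            * (Vb k ⬝ᵥ x s) := by
      calc ∑ a, (Vb k a) ^ 2
          = ∑ a, Vb k a
              * ∑ s, σ s * μ s * (if 0 < Vb k ⬝ᵥ x s + bb k then wb k else 0)
                  * x s a := by
            refine Finset.sum_congr rfl fun a _ => ?_
            rw [sq]; congr 1; exact hbV k a
        _ = ∑ s, σ s * μ s * (if 0 < Vb k ⬝ᵥ x s + bb k then wb k else 0)
              * (Vb k ⬝ᵥ x s) := by
            simp_rw [Finset.mul_sum, dotProduct, Finset.mul_sum]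
            rw [Finset.sum_comm]
            exact Finset.sum_congr rfl fun s _ =>
              Finset.sum_congr rfl fun a _ => by ring
    have hB : (bb k) ^ 2
        = ∑ s, σ s * μ s * (if 0 < Vb k ⬝ᵥ x s + bb k then wb k else 0) * bb k := by
      rw [← Finset.sum_mul, ← hcb k, sq]
    rw [hV, hB, ← Finset.sum_add_distrib]
    have : ∀ s : ι,
        σ s * μ s * (if 0 < Vb k ⬝ᵥ x s + bb k then wb k else 0) * (Vb k ⬝ᵥ x s)
          + σ s * μ s * (if 0 < Vb k ⬝ᵥ x s + bb k then wb k else 0) * bb k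
        = σ s * μ s * (if 0 < Vb k ⬝ᵥ x s + bb k then Vb k ⬝ᵥ x s + bb k else 0)
            * wb k := by
      intro s
      by_cases h : 0 < Vb k ⬝ᵥ x s + bb k <;> simp [h] <;> ring
    rw [Finset.sum_congr rfl fun s _ => this s, ← Finset.sum_mul, ← ha k, sq]
  refine ⟨h1, ?_⟩
  -- total identity
  have h2 : ∀ k, (wb k) ^ 2
      = ∑ s, σ s * μ s
          * ((if 0 < Vb k ⬝ᵥ x s + bb k then Vb k ⬝ᵥ x s + bb k else 0) * wb k) := by
    intro k
    calc (wb k) ^ 2 = wb k * wb k := sq (wb k)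
      _ = (∑ s, σ s * μ s
            * (if 0 < Vb k ⬝ᵥ x s + bb k then Vb k ⬝ᵥ x s + bb k else 0)) * wb k := by
          rw [← ha k]
      _ = _ := by rw [Finset.sum_mul]; exact Finset.sum_congr rfl fun s _ => by ring
  calc ∑ k, (wb k) ^ 2
      = ∑ s, σ s * μ s
          * ∑ k, wb k * max (Vb k ⬝ᵥ x s + bb k) 0 := by
        simp_rw [h2]
        rw [Finset.sum_comm]
        refine Finset.sum_congr rfl fun s _ => ?_
        rw [Finset.mul_sum]
        refine Finset.sum_congr rfl fun k _ => ?_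
        rw [hmax]; ring
    _ = ∑ s, μ s := by
        refine Finset.sum_congr rfl fun s _ => ?_
        have h := hd s
        rcases hσ s with h1 | h1 <;> rw [h1] at h ⊢
        · have hS : ∑ k, wb k * max (Vb k ⬝ᵥ x s + bb k) 0 = 1 := by linarith
          rw [hS]; ring
        · have hS : ∑ k, wb k * max (Vb k ⬝ᵥ x s + bb k) 0 = -1 := by linarith
          rw [hS]; ring
end

section
/- Fix finite sets {x_i}_{i∈I} and {x_j}_{j∈J} in ℝⁿ and fixed diagonal matrices G_s ∈ {0,1}^{r×r} for s ∈ I ∪ J, and define ℓ(w, V, b) = Σ_{i∈I} log(1 + exp(−wᵀ G_i (V x_i + b))) + Σ_{j∈J} log(1 + exp(wᵀ G_j (V x_j + b))) for w ∈ ℝʳ, V ∈ ℝ^{r×n}, b ∈ ℝʳ. If (w(t), V(t), b(t)), t ≥ 0, is a solution of the gradient flow dw/dt = −∇_w ℓ, dV/dt = −∇_V ℓ, db/dt = −∇_b ℓ, then ‖w(t)‖₂² − ‖V(t)‖_F² − ‖b(t)‖₂² = ‖w(0)‖₂² − ‖V(0)‖_F² − ‖b(0)‖₂² for all t ≥ 0.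 -/
open Finset

noncomputable def sp (z : ℝ) : ℝ := Real.log (1 + Real.exp z)
noncomputable def sp' (z : ℝ) : ℝ := Real.exp z / (1 + Real.exp z)

lemma sp_hasDerivAt (z : ℝ) : HasDerivAt sp (sp' z) z := by
  have h : (0:ℝ) < 1 + Real.exp z := by positivity
  exact ((Real.hasDerivAt_exp z).const_add 1).log h.ne'

noncomputable def dot1 {m : Type*} [Fintype m] [DecidableEq m] (c : m → ℝ) :
    (m → ℝ) →L[ℝ] ℝ :=
  ∑ k, c k • ContinuousLinearMap.proj k

lemma dot1_apply {m : Type*} [Fintype m] [DecidableEq m] (c u : m → ℝ) :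
    dot1 c u = ∑ k, u k * c k := by
  simp [dot1, mul_comm]

noncomputable def dot2 {m p : Type*} [Fintype m] [Fintype p] [DecidableEq m] [DecidableEq p]
    (c : m → p → ℝ) : (m → p → ℝ) →L[ℝ] ℝ :=
  ∑ k, ∑ a, c k a • ((ContinuousLinearMap.proj a : (p → ℝ) →L[ℝ] ℝ).comp
    (ContinuousLinearMap.proj k : (m → p → ℝ) →L[ℝ] (p → ℝ)))

lemma dot2_apply {m p : Type*} [Fintype m] [Fintype p] [DecidableEq m] [DecidableEq p]
    (c u : m → p → ℝ) : dot2 c u = ∑ k, ∑ a, u k a * c k a := by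
  simp [dot2, mul_comm]

lemma loss_hasFDerivAt {E : Type*} [NormedAddCommGroup E] [NormedSpace ℝ E]
    {ι κ : Type*} [Fintype ι] [Fintype κ]
    (LI : ι → E →L[ℝ] ℝ) (cI : ι → ℝ) (LJ : κ → E →L[ℝ] ℝ) (cJ : κ → ℝ) (x : E) :
    HasFDerivAt (fun u => (∑ i, sp (LI i u + cI i)) + ∑ j, sp (LJ j u + cJ j))
      ((∑ i, sp' (LI i x + cI i) • LI i) + ∑ j, sp' (LJ j x + cJ j) • LJ j) x := by
  refine HasFDerivAt.add (HasFDerivAt.fun_sum fun i _ => ?_) (HasFDerivAt.fun_sum fun j _ => ?_)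
  · exact (sp_hasDerivAt _).comp_hasFDerivAt x ((LI i).hasFDerivAt.add_const _)
  · exact (sp_hasDerivAt _).comp_hasFDerivAt x ((LJ j).hasFDerivAt.add_const _)

lemma euler_aux {E : Type*} [NormedAddCommGroup E] [NormedSpace ℝ E]
    {ι κ : Type*} [Fintype ι] [Fintype κ]
    (LI : ι → E →L[ℝ] ℝ) (cI : ι → ℝ) (LJ : κ → E →L[ℝ] ℝ) (cJ : κ → ℝ)
    (f : E → ℝ)
    (hf : f = fun u => (∑ i, sp (LI i u + cI i)) + ∑ j, sp (LJ j u + cJ j)) (x : E) :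
    fderiv ℝ f x x
      = (∑ i, sp' (LI i x + cI i) * LI i x) + ∑ j, sp' (LJ j x + cJ j) * LJ j x := by
  subst hf
  rw [(loss_hasFDerivAt LI cI LJ cJ x).fderiv]
  simp

set_option maxHeartbeats 1000000 in
lemma euler {r n : ℕ} {ι κ : Type*} [Fintype ι] [Fintype κ]
    (xI : ι → Fin n → ℝ) (xJ : κ → Fin n → ℝ)
    (GI : ι → Fin r → ℝ) (GJ : κ → Fin r → ℝ)
    (ℓ : (Fin r → ℝ) → (Fin r → Fin n → ℝ) → (Fin r → ℝ) → ℝ)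
    (hℓ : ∀ w V b, ℓ w V b =
      (∑ i, Real.log (1 + Real.exp (-(∑ k, w k * (GI i k * ((∑ a, V k a * xI i a) + b k))))))
      + ∑ j, Real.log (1 + Real.exp (∑ k, w k * (GJ j k * ((∑ a, V k a * xJ j a) + b k)))))
    (ww : Fin r → ℝ) (VV : Fin r → Fin n → ℝ) (bb : Fin r → ℝ) :
    fderiv ℝ (fun u => ℓ u VV bb) ww ww
      = fderiv ℝ (fun M => ℓ ww M bb) VV VV + fderiv ℝ (fun u => ℓ ww VV u) bb bb := by
  classical
  have key : ∀ (G : Fin r → ℝ) (x : Fin n → ℝ) (M : Fin r → Fin n → ℝ) (u : Fin r → ℝ),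
      ∑ k, ww k * (G k * ((∑ a, M k a * x a) + u k))
        = (∑ k, ww k * (G k * ∑ a, M k a * x a)) + ∑ k, ww k * (G k * u k) := by
    intro G x M u
    rw [← Finset.sum_add_distrib]
    exact Finset.sum_congr rfl fun k _ => by ring
  have keyM : ∀ (G : Fin r → ℝ) (x : Fin n → ℝ) (M : Fin r → Fin n → ℝ),
      ∑ k, ∑ a, M k a * (ww k * (G k * x a))
        = ∑ k, ww k * (G k * ∑ a, M k a * x a) := by
    intro G x M
    refine Finset.sum_congr rfl fun k _ => ?_
    rw [Finset.mul_sum, Finset.mul_sum]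
    exact Finset.sum_congr rfl fun a _ => by ring
  -- canonical per-sample quantities (as plain abbreviations)
  let pI : ι → ℝ := fun i => ∑ k, ww k * (GI i k * ∑ a, VV k a * xI i a)
  let qI : ι → ℝ := fun i => ∑ k, ww k * (GI i k * bb k)
  let pJ : κ → ℝ := fun j => ∑ k, ww k * (GJ j k * ∑ a, VV k a * xJ j a)
  let qJ : κ → ℝ := fun j => ∑ k, ww k * (GJ j k * bb k)
  -- w-derivative
  have hDw : fderiv ℝ (fun u => ℓ u VV bb) ww ww
      = (∑ i, sp' (-(pI i + qI i)) * (-(pI i + qI i)))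
        + ∑ j, sp' (pJ j + qJ j) * (pJ j + qJ j) := by
    have hf : (fun u => ℓ u VV bb)
        = fun u => (∑ i, sp (dot1 (fun k => -(GI i k * ((∑ a, VV k a * xI i a) + bb k))) u + 0))
          + ∑ j, sp (dot1 (fun k => GJ j k * ((∑ a, VV k a * xJ j a) + bb k)) u + 0) := by
      funext u
      rw [hℓ]
      simp only [sp, dot1_apply, add_zero, mul_neg, Finset.sum_neg_distrib]
    have hvI : ∀ i, dot1 (fun k => -(GI i k * ((∑ a, VV k a * xI i a) + bb k))) ww
        = -(pI i + qI i) := by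
      intro i
      rw [dot1_apply]
      show _ = -((∑ k, ww k * (GI i k * ∑ a, VV k a * xI i a)) + ∑ k, ww k * (GI i k * bb k))
      rw [← key (GI i) (xI i) VV bb]
      simp only [mul_neg, Finset.sum_neg_distrib]
    have hvJ : ∀ j, dot1 (fun k => GJ j k * ((∑ a, VV k a * xJ j a) + bb k)) ww
        = pJ j + qJ j := by
      intro j
      rw [dot1_apply]
      exact key (GJ j) (xJ j) VV bb
    rw [euler_aux _ _ _ _ _ hf]
    congr 1
    · exact Finset.sum_congr rfl fun i _ => by rw [hvI i, add_zero]
    · exact Finset.sum_congr rfl fun j _ => by rw [hvJ j, add_zero]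
  -- V-derivative
  have hDV : fderiv ℝ (fun M => ℓ ww M bb) VV VV
      = (∑ i, sp' (-(pI i + qI i)) * (-(pI i)))
        + ∑ j, sp' (pJ j + qJ j) * (pJ j) := by
    have hf : (fun M => ℓ ww M bb)
        = fun M => (∑ i, sp (dot2 (fun k a => -(ww k * (GI i k * xI i a))) M + (-(qI i))))
          + ∑ j, sp (dot2 (fun k a => ww k * (GJ j k * xJ j a)) M + qJ j) := by
      funext M
      rw [hℓ]
      congr 1
      · refine Finset.sum_congr rfl fun i _ => ?_
        rw [dot2_apply]
        show Real.log (1 + Real.exp (-(∑ k, ww k * (GI i k * ((∑ a, M k a * xI i a) + bb k)))))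
          = Real.log (1 + Real.exp ((∑ k, ∑ a, M k a * -(ww k * (GI i k * xI i a)))
              + -(∑ k, ww k * (GI i k * bb k))))
        simp only [mul_neg, Finset.sum_neg_distrib, ← neg_add]
        rw [key (GI i) (xI i) M bb, keyM (GI i) (xI i) M]
      · refine Finset.sum_congr rfl fun j _ => ?_
        rw [dot2_apply]
        show Real.log (1 + Real.exp (∑ k, ww k * (GJ j k * ((∑ a, M k a * xJ j a) + bb k))))
          = Real.log (1 + Real.exp ((∑ k, ∑ a, M k a * (ww k * (GJ j k * xJ j a)))
              + ∑ k, ww k * (GJ j k * bb k)))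
        rw [key (GJ j) (xJ j) M bb, keyM (GJ j) (xJ j) M]
    have hvI : ∀ i, dot2 (fun k a => -(ww k * (GI i k * xI i a))) VV = -(pI i) := by
      intro i
      rw [dot2_apply]
      show _ = -(∑ k, ww k * (GI i k * ∑ a, VV k a * xI i a))
      rw [← keyM (GI i) (xI i) VV]
      simp only [mul_neg, Finset.sum_neg_distrib]
    have hvJ : ∀ j, dot2 (fun k a => ww k * (GJ j k * xJ j a)) VV = pJ j := by
      intro j
      rw [dot2_apply]
      exact keyM (GJ j) (xJ j) VV
    rw [euler_aux _ _ _ _ _ hf]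
    refine congrArg₂ HAdd.hAdd (Finset.sum_congr rfl fun i _ => ?_)
      (Finset.sum_congr rfl fun j _ => ?_)
    · rw [hvI i, ← neg_add]
    · rw [hvJ j]
  -- b-derivative
  have hDb : fderiv ℝ (fun u => ℓ ww VV u) bb bb
      = (∑ i, sp' (-(pI i + qI i)) * (-(qI i)))
        + ∑ j, sp' (pJ j + qJ j) * (qJ j) := by
    have hf : (fun u => ℓ ww VV u)
        = fun u => (∑ i, sp (dot1 (fun k => -(ww k * GI i k)) u + (-(pI i))))
          + ∑ j, sp (dot1 (fun k => ww k * GJ j k) u + pJ j) := by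
      funext u
      rw [hℓ]
      congr 1
      · refine Finset.sum_congr rfl fun i _ => ?_
        rw [dot1_apply]
        show Real.log (1 + Real.exp (-(∑ k, ww k * (GI i k * ((∑ a, VV k a * xI i a) + u k)))))
          = Real.log (1 + Real.exp ((∑ k, u k * -(ww k * GI i k))
              + -(∑ k, ww k * (GI i k * ∑ a, VV k a * xI i a))))
        simp only [mul_neg, Finset.sum_neg_distrib, ← neg_add]
        rw [key (GI i) (xI i) VV u,
          show (∑ k, ww k * (GI i k * u k)) = ∑ k, u k * (ww k * GI i k) from
            Finset.sum_congr rfl fun k _ => by ring,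
          add_comm (∑ k, ww k * (GI i k * ∑ a, VV k a * xI i a))
            (∑ k, u k * (ww k * GI i k))]
      · refine Finset.sum_congr rfl fun j _ => ?_
        rw [dot1_apply]
        show Real.log (1 + Real.exp (∑ k, ww k * (GJ j k * ((∑ a, VV k a * xJ j a) + u k))))
          = Real.log (1 + Real.exp ((∑ k, u k * (ww k * GJ j k))
              + ∑ k, ww k * (GJ j k * ∑ a, VV k a * xJ j a)))
        rw [key (GJ j) (xJ j) VV u,
          show (∑ k, ww k * (GJ j k * u k)) = ∑ k, u k * (ww k * GJ j k) from
            Finset.sum_congr rfl fun k _ => by ring,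
          add_comm (∑ k, ww k * (GJ j k * ∑ a, VV k a * xJ j a))
            (∑ k, u k * (ww k * GJ j k))]
    have hvI : ∀ i, dot1 (fun k => -(ww k * GI i k)) bb = -(qI i) := by
      intro i
      rw [dot1_apply]
      show _ = -(∑ k, ww k * (GI i k * bb k))
      simp only [mul_neg, Finset.sum_neg_distrib]
      congr 1
      exact Finset.sum_congr rfl fun k _ => by ring
    have hvJ : ∀ j, dot1 (fun k => ww k * GJ j k) bb = qJ j := by
      intro j
      rw [dot1_apply]
      exact Finset.sum_congr rfl fun k _ => by ring
    rw [euler_aux _ _ _ _ _ hf]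
    congr 1
    · exact Finset.sum_congr rfl fun i _ => by rw [hvI i, ← neg_add, add_comm (pI i) (qI i)]
    · exact Finset.sum_congr rfl fun j _ => by rw [hvJ j, add_comm (qJ j) (pJ j)]
  rw [hDw, hDV, hDb]
  rw [add_add_add_comm, ← Finset.sum_add_distrib, ← Finset.sum_add_distrib]
  congr 1
  · exact Finset.sum_congr rfl fun i _ => by ring
  · exact Finset.sum_congr rfl fun j _ => by ring

lemma sum_single {m : Type*} [Fintype m] [DecidableEq m]
    (D : (m → ℝ) →L[ℝ] ℝ) (x : m → ℝ) :
    ∑ k, x k * D (Pi.single k 1) = D x := by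
  have hx : x = ∑ k, x k • (Pi.single k (1:ℝ) : m → ℝ) := by
    funext k'
    simp [Finset.sum_apply, Pi.single_apply]
  conv_rhs => rw [hx]
  simp [smul_eq_mul]

lemma sum2_single {m p : Type*} [Fintype m] [Fintype p] [DecidableEq m] [DecidableEq p]
    (D : (m → p → ℝ) →L[ℝ] ℝ) (x : m → p → ℝ) :
    ∑ k, ∑ a, x k a * D (Pi.single k (Pi.single a 1)) = D x := by
  have hx : x = ∑ k, ∑ a, x k a • (Pi.single k (Pi.single a (1:ℝ)) : m → p → ℝ) := by
    funext k' a'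
    simp only [Finset.sum_apply, Pi.smul_apply, smul_eq_mul]
    simp [Pi.single_apply, apply_ite (fun f : p → ℝ => f a'), mul_ite, mul_one, mul_zero,
      Finset.sum_ite_eq', Finset.sum_ite_eq]
  conv_rhs => rw [hx]
  simp [smul_eq_mul]

/-- Lemma 2 in the proof of Theorem 3.  Along the gradient flow of the
two-layer cross-entropy loss with frozen 0/1 activation patterns `G`, the quantity
`‖w‖₂² − ‖V‖_F² − ‖b‖₂²` is conserved. -/
theorem stmt9 {r n : ℕ} {ι κ : Type*} [Fintype ι] [Fintype κ]
    (xI : ι → Fin n → ℝ) (xJ : κ → Fin n → ℝ)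
    (GI : ι → Fin r → ℝ) (GJ : κ → Fin r → ℝ)
    (hGI : ∀ i k, GI i k = 0 ∨ GI i k = 1) (hGJ : ∀ j k, GJ j k = 0 ∨ GJ j k = 1)
    (ℓ : (Fin r → ℝ) → (Fin r → Fin n → ℝ) → (Fin r → ℝ) → ℝ)
    (hℓ : ∀ w V b, ℓ w V b =
      (∑ i, Real.log (1 + Real.exp (-(∑ k, w k * (GI i k * ((∑ a, V k a * xI i a) + b k))))))
      + ∑ j, Real.log (1 + Real.exp (∑ k, w k * (GJ j k * ((∑ a, V k a * xJ j a) + b k)))))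
    (w : ℝ → Fin r → ℝ) (V : ℝ → Fin r → Fin n → ℝ) (b : ℝ → Fin r → ℝ)
    -- gradient flow: `dw/dt = −∇_w ℓ`, `dV/dt = −∇_V ℓ`, `db/dt = −∇_b ℓ`
    (hw : ∀ t ≥ (0 : ℝ), ∀ k, HasDerivAt (fun τ => w τ k)
      (-(fderiv ℝ (fun u : Fin r → ℝ => ℓ u (V t) (b t)) (w t)) (Pi.single k 1)) t)
    (hV : ∀ t ≥ (0 : ℝ), ∀ k a, HasDerivAt (fun τ => V τ k a)
      (-(fderiv ℝ (fun M : Fin r → Fin n → ℝ => ℓ (w t) M (b t)) (V t))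
        (Pi.single k (Pi.single a 1))) t)
    (hb : ∀ t ≥ (0 : ℝ), ∀ k, HasDerivAt (fun τ => b τ k)
      (-(fderiv ℝ (fun u : Fin r → ℝ => ℓ (w t) (V t) u) (b t)) (Pi.single k 1)) t) :
    ∀ t ≥ (0 : ℝ),
      (∑ k, (w t k) ^ 2) - (∑ k, ∑ a, (V t k a) ^ 2) - (∑ k, (b t k) ^ 2) =
      (∑ k, (w 0 k) ^ 2) - (∑ k, ∑ a, (V 0 k a) ^ 2) - (∑ k, (b 0 k) ^ 2) := by
  classical
  have key : ∀ τ ≥ (0:ℝ), HasDerivAt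
      (fun σ => (∑ k, (w σ k)^2) - (∑ k, ∑ a, (V σ k a)^2) - (∑ k, (b σ k)^2)) 0 τ := by
    intro τ hτ
    set Dw := fderiv ℝ (fun u : Fin r → ℝ => ℓ u (V τ) (b τ)) (w τ) with hDwdef
    set DV := fderiv ℝ (fun M : Fin r → Fin n → ℝ => ℓ (w τ) M (b τ)) (V τ) with hDVdef
    set Db := fderiv ℝ (fun u : Fin r → ℝ => ℓ (w τ) (V τ) u) (b τ) with hDbdef
    have hW : HasDerivAt (fun σ => ∑ k, (w σ k)^2)
        (∑ k, 2 * w τ k * -(Dw (Pi.single k 1))) τ := by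
      refine HasDerivAt.fun_sum fun k _ => ?_
      simpa using (hw τ hτ k).fun_pow 2
    have hVd : HasDerivAt (fun σ => ∑ k, ∑ a, (V σ k a)^2)
        (∑ k, ∑ a, 2 * V τ k a * -(DV (Pi.single k (Pi.single a 1)))) τ := by
      refine HasDerivAt.fun_sum fun k _ => HasDerivAt.fun_sum fun a _ => ?_
      simpa using (hV τ hτ k a).fun_pow 2
    have hB : HasDerivAt (fun σ => ∑ k, (b σ k)^2)
        (∑ k, 2 * b τ k * -(Db (Pi.single k 1))) τ := by
      refine HasDerivAt.fun_sum fun k _ => ?_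
      simpa using (hb τ hτ k).fun_pow 2
    have hA : (∑ k, 2 * w τ k * -(Dw (Pi.single k 1))) = -2 * Dw (w τ) := by
      rw [← sum_single Dw (w τ), Finset.mul_sum]
      exact Finset.sum_congr rfl fun k _ => by ring
    have hAV : (∑ k, ∑ a, 2 * V τ k a * -(DV (Pi.single k (Pi.single a 1))))
        = -2 * DV (V τ) := by
      rw [← sum2_single DV (V τ), Finset.mul_sum]
      refine Finset.sum_congr rfl fun k _ => ?_
      rw [Finset.mul_sum]
      exact Finset.sum_congr rfl fun a _ => by ring
    have hAB : (∑ k, 2 * b τ k * -(Db (Pi.single k 1))) = -2 * Db (b τ) := by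
      rw [← sum_single Db (b τ), Finset.mul_sum]
      exact Finset.sum_congr rfl fun k _ => by ring
    have htot := (hW.sub hVd).sub hB
    have he := euler xI xJ GI GJ ℓ hℓ (w τ) (V τ) (b τ)
    have h0 : (∑ k, 2 * w τ k * -(Dw (Pi.single k 1)))
        - (∑ k, ∑ a, 2 * V τ k a * -(DV (Pi.single k (Pi.single a 1))))
        - (∑ k, 2 * b τ k * -(Db (Pi.single k 1))) = 0 := by
      rw [hA, hAV, hAB, hDwdef, hDVdef, hDbdef, he]
      ring
    rw [h0] at htot
    exact htot
  intro t ht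
  have := constant_of_has_deriv_right_zero
    (f := fun σ => (∑ k, (w σ k)^2) - (∑ k, ∑ a, (V σ k a)^2) - (∑ k, (b σ k)^2))
    (a := 0) (b := t)
    (fun x hx => ((key x hx.1).continuousAt).continuousWithinAt)
    (fun x hx => (key x hx.1).hasDerivWithinAt)
  exact this t (Set.right_mem_Icc.mpr ht)
end

section
/- Let L ≥ 1 and n_0, …, n_L ∈ ℕ with n_L = 1, let {x_s}_{s∈S} be a finite set of points in ℝ^{n_0} with target values {y_s}_{s∈S} ⊂ ℝ, let d : ℝ × ℝ → ℝ be differentiable in its first argument, and let μ_k > 0 for k ∈ [L]. Define ℓ(W_1, …, W_L) = Σ_{s∈S} d(W_L ⋯ W_1 x_s, y_s) + Σ_{k∈[L]} μ_k ‖W_k‖_F², where W_k ∈ ℝ^{n_k × n_{k−1}}. If (W̄_1, …, W̄_L) is a stationary point of ℓ, i.e. the partial derivative of ℓ with respect to each W_k vanishes at (W̄_1, …, W̄_L), then rank(W̄_k) ≤ 1 for every k ∈ [L]. -/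
/-- Forward pass of a deep linear network: `fwd n W x k = W_{k} ⋯ W_1 x` (activations at
layer `k`). -/
def fwd (n : ℕ → ℕ) (W : ∀ k : ℕ, Matrix (Fin (n (k + 1))) (Fin (n k)) ℝ)
    (x : Fin (n 0) → ℝ) : ∀ k : ℕ, Fin (n k) → ℝ
  | 0 => x
  | k + 1 => (W k).mulVec (fwd n W x k)

/-- Propagation of a vector at layer `j` through layers `j, j+1, …, j+m-1`. -/
def propg (n : ℕ → ℕ) (W : ∀ k : ℕ, Matrix (Fin (n (k + 1))) (Fin (n k)) ℝ)
    (j : ℕ) (v : Fin (n j) → ℝ) : ∀ m : ℕ, Fin (n (j + m)) → ℝ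
  | 0 => v
  | m + 1 => (W (j + m)).mulVec (propg n W j v m)

lemma propg_add (n : ℕ → ℕ) (W : ∀ k : ℕ, Matrix (Fin (n (k + 1))) (Fin (n k)) ℝ)
    (j : ℕ) (v w : Fin (n j) → ℝ) (m : ℕ) :
    propg n W j (v + w) m = propg n W j v m + propg n W j w m := by
  induction m with
  | zero => rfl
  | succ m ih => simp [propg, ih, Matrix.mulVec_add]

lemma propg_smul (n : ℕ → ℕ) (W : ∀ k : ℕ, Matrix (Fin (n (k + 1))) (Fin (n k)) ℝ)
    (j : ℕ) (c : ℝ) (v : Fin (n j) → ℝ) (m : ℕ) :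
    propg n W j (c • v) m = c • propg n W j v m := by
  induction m with
  | zero => rfl
  | succ m ih => simp [propg, ih, Matrix.mulVec_smul]

lemma propg_congr (n : ℕ → ℕ) (W1 W2 : ∀ k : ℕ, Matrix (Fin (n (k + 1))) (Fin (n k)) ℝ)
    (j : ℕ) (h : ∀ i, j ≤ i → W1 i = W2 i) (v : Fin (n j) → ℝ) (m : ℕ) :
    propg n W1 j v m = propg n W2 j v m := by
  induction m with
  | zero => rfl
  | succ m ih => simp [propg, ih, h (j + m) (by omega)]

lemma fwd_add_propg (n : ℕ → ℕ) (W : ∀ k : ℕ, Matrix (Fin (n (k + 1))) (Fin (n k)) ℝ)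
    (x : Fin (n 0) → ℝ) (j m : ℕ) :
    fwd n W x (j + m) = propg n W j (fwd n W x j) m := by
  induction m with
  | zero => rfl
  | succ m ih =>
    show (W (j + m)).mulVec (fwd n W x (j + m)) = (W (j + m)).mulVec (propg n W j (fwd n W x j) m)
    rw [ih]

lemma fwd_update_of_le (n : ℕ → ℕ) (W : ∀ k : ℕ, Matrix (Fin (n (k + 1))) (Fin (n k)) ℝ)
    (k : ℕ) (M : Matrix (Fin (n (k + 1))) (Fin (n k)) ℝ) (x : Fin (n 0) → ℝ) :
    ∀ m, m ≤ k → fwd n (Function.update W k M) x m = fwd n W x m := by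
  intro m
  induction m with
  | zero => intro _; rfl
  | succ m ih =>
    intro h
    have h1 : m ≠ k := by omega
    show (Function.update W k M m).mulVec (fwd n (Function.update W k M) x m)
      = (W m).mulVec (fwd n W x m)
    rw [Function.update_of_ne h1, ih (by omega)]

lemma rank_le_one_of_factor {p q : ℕ} (M : Matrix (Fin p) (Fin q) ℝ)
    (g : Fin p → ℝ) (h : Fin q → ℝ) (hM : ∀ a b, M a b = g a * h b) : M.rank ≤ 1 := by
  have hMeq : M = Matrix.replicateCol (Fin 1) g * Matrix.replicateRow (Fin 1) h := by
    ext a b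
    simp [Matrix.mul_apply, hM]
  rw [hMeq]
  exact (Matrix.rank_mul_le_left _ _).trans
    ((Matrix.replicateCol (Fin 1) g).rank_le_card_width.trans (by simp))

/-- deterministic content of Theorem 4.  At any stationary point of the
weight-decay–regularized deep linear network loss
`ℓ(W₁,…,W_L) = Σ_s d(W_L ⋯ W_1 x_s, y_s) + Σ_k μ_k ‖W_k‖_F²` (with scalar output,
`n_L = 1`, `μ_k > 0`, and `d` differentiable in its first argument), every weight matrix
has rank at most 1. -/
theorem stmt10 {ι : Type*} [Fintype ι] (L : ℕ) (hL : 1 ≤ L)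
    (n : ℕ → ℕ) (hnL : n L = 1)
    (x : ι → Fin (n 0) → ℝ) (y : ι → ℝ)
    (d : ℝ → ℝ → ℝ) (hd : ∀ z : ℝ, Differentiable ℝ (fun u => d u z))
    (mu : ℕ → ℝ) (hmu : ∀ k < L, 0 < mu k)
    (loss : (∀ k : ℕ, Matrix (Fin (n (k + 1))) (Fin (n k)) ℝ) → ℝ)
    (hloss : ∀ Wt, loss Wt =
      (∑ s, d (∑ i, fwd n Wt (x s) L i) (y s)) +
        ∑ k ∈ Finset.range L, mu k * ∑ a, ∑ b, (Wt k a b) ^ 2)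
    (W : ∀ k : ℕ, Matrix (Fin (n (k + 1))) (Fin (n k)) ℝ)
    -- stationarity: every partial derivative of the loss vanishes at `W`
    (hstat : ∀ k < L, ∀ (a : Fin (n (k + 1))) (b : Fin (n k)),
      HasDerivAt
        (fun ε : ℝ => loss (Function.update W k (W k + ε • Matrix.single a b 1)))
        0 0) :
    ∀ k < L, (W k).rank ≤ 1 := by
  intro k hk
  obtain ⟨t, rfl⟩ : ∃ t, L = k + 1 + t := ⟨L - (k + 1), by omega⟩
  -- notation
  set v : ι → Fin (n k) → ℝ := fun s => fwd n W (x s) k with hv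
  set p : ι → ℝ := fun s => ∑ i, fwd n W (x s) (k + 1 + t) i with hp
  set u : Fin (n (k + 1)) → ℝ :=
    fun a0 => ∑ i, propg n W (k + 1) (Pi.single a0 1) t i with hu
  set D : ι → ℝ := fun s => deriv (fun z => d z (y s)) (p s) with hD
  have hmuk : mu k ≠ 0 := (hmu k hk).ne'
  -- the key stationarity equation
  have key : ∀ (a : Fin (n (k + 1))) (b : Fin (n k)),
      (∑ s, D s * v s b) * u a + 2 * mu k * W k a b = 0 := by
    intro a b
    set E : Matrix (Fin (n (k + 1))) (Fin (n k)) ℝ := Matrix.single a b 1 with hE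
    -- pointwise computation of the network output along the perturbation line
    have hpoint : ∀ (s : ι) (ε : ℝ),
        (∑ i, fwd n (Function.update W k (W k + ε • E)) (x s) (k + 1 + t) i)
          = p s + ε * (v s b * u a) := by
      intro s ε
      set W' := Function.update W k (W k + ε • E) with hW'
      have hstep : fwd n W' (x s) (k + 1)
          = (W k).mulVec (v s) + (ε * v s b) • (Pi.single a 1 : Fin (n (k + 1)) → ℝ) := by
        show (W' k).mulVec (fwd n W' (x s) k) = _
        rw [hW', Function.update_self, fwd_update_of_le n W k _ (x s) k le_rfl,
          Matrix.add_mulVec, Matrix.smul_mulVec, Matrix.single_mulVec]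
        congr 1
        ext i
        by_cases hia : i = a <;> simp [hia, Function.update_apply, Pi.single_apply, hv] <;> ring
      have hfw1 : fwd n W (x s) (k + 1) = (W k).mulVec (v s) := rfl
      have hmain : fwd n W' (x s) (k + 1 + t)
          = fwd n W (x s) (k + 1 + t)
            + (ε * v s b) • propg n W (k + 1) (Pi.single a 1) t := by
        rw [fwd_add_propg n W' (x s) (k + 1) t,
          propg_congr n W' W (k + 1)
            (fun i hi => Function.update_of_ne (by omega) _ _) _ t,
          hstep, propg_add, propg_smul, fwd_add_propg n W (x s) (k + 1) t, hfw1]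
      rw [hmain]
      simp only [Pi.add_apply, Pi.smul_apply, smul_eq_mul, Finset.sum_add_distrib,
        ← Finset.mul_sum]
      rw [hp, hu]
      ring
    -- rewrite the stationarity hypothesis with explicit formulas
    have hstat' := hstat k hk a b
    have hF : (fun ε : ℝ => loss (Function.update W k (W k + ε • Matrix.single a b 1)))
        = fun ε : ℝ => (∑ s, d (p s + ε * (v s b * u a)) (y s))
            + ∑ j ∈ Finset.range (k + 1 + t), mu j *
                ∑ a', ∑ b', ((Function.update W k (W k + ε • E)) j a' b') ^ 2 := by
      funext ε
      rw [← hE, hloss]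
      congr 1
      exact Finset.sum_congr rfl fun s _ => by rw [hpoint s ε]
    rw [hF] at hstat'
    -- compute the actual derivative
    have hder1 : HasDerivAt (fun ε : ℝ => ∑ s, d (p s + ε * (v s b * u a)) (y s))
        (∑ s, D s * (v s b * u a)) 0 := by
      apply HasDerivAt.fun_sum
      intro s _
      have hinner : HasDerivAt (fun ε : ℝ => p s + ε * (v s b * u a)) (v s b * u a) 0 := by
        simpa using ((hasDerivAt_id (0 : ℝ)).mul_const (v s b * u a)).const_add (p s)
      have houter : HasDerivAt (fun z => d z (y s)) (D s) (p s) := (hd (y s) (p s)).hasDerivAt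
      have := HasDerivAt.comp_of_eq (hh₂ := houter) (hh := hinner) (hy := by simp)
      exact this
    have hder2 : HasDerivAt (fun ε : ℝ => ∑ j ∈ Finset.range (k + 1 + t), mu j *
          ∑ a', ∑ b', ((Function.update W k (W k + ε • E)) j a' b') ^ 2)
        (2 * mu k * W k a b) 0 := by
      have hj : ∀ j ∈ Finset.range (k + 1 + t),
          HasDerivAt (fun ε : ℝ => mu j *
              ∑ a', ∑ b', ((Function.update W k (W k + ε • E)) j a' b') ^ 2)
            (if j = k then 2 * mu k * W k a b else 0) 0 := by
        intro j hj
        by_cases hjk : j = k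
        · subst hjk
          simp only [Function.update_self, if_pos rfl]
          have hab : ∀ (a' : Fin (n (j + 1))) (b' : Fin (n j)),
              HasDerivAt (fun ε : ℝ => ((W j + ε • E) a' b') ^ 2)
                (2 * (W j a' b' * E a' b')) 0 := by
            intro a' b'
            have hlin : HasDerivAt (fun ε : ℝ => W j a' b' + ε * E a' b') (E a' b') 0 := by
              simpa using ((hasDerivAt_id (0 : ℝ)).mul_const (E a' b')).const_add (W j a' b')
            have := hlin.pow 2
            simp only [Matrix.add_apply, Matrix.smul_apply, smul_eq_mul]
            refine HasDerivAt.congr_deriv this (Eq.symm ?_)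
            push_cast
            ring
          have hsum : HasDerivAt (fun ε : ℝ => ∑ a', ∑ b', ((W j + ε • E) a' b') ^ 2)
              (∑ a', ∑ b', 2 * (W j a' b' * E a' b')) 0 := by
            apply HasDerivAt.fun_sum
            intro a' _
            exact HasDerivAt.fun_sum fun b' _ => hab a' b'
          have := hsum.const_mul (mu j)
          refine HasDerivAt.congr_deriv this (Eq.symm ?_)
          rw [hE]
          have hval : ∀ a' : Fin (n (j + 1)),
              (∑ b' : Fin (n j), 2 * (W j a' b' * Matrix.single a b (1 : ℝ) a' b'))
                = if a = a' then 2 * W j a' b else 0 := by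
            intro a'
            by_cases ha : a = a'
            · subst ha
              simp [Matrix.single, ite_and, Finset.sum_ite_eq]
            · simp [Matrix.single, ite_and, ha]
          rw [Finset.sum_congr rfl fun a' _ => hval a', Finset.sum_ite_eq]
          simp
          ring
        · simp only [Function.update_of_ne hjk, if_neg hjk]
          exact hasDerivAt_const 0 _
      have h2 := HasDerivAt.fun_sum hj
      refine HasDerivAt.congr_deriv h2 (Eq.symm ?_)
      rw [Finset.sum_ite_eq' (Finset.range (k + 1 + t)) k]
      simp [Finset.mem_range.mpr (by omega : k < k + 1 + t)]
    have htot := hder1.add hder2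
    have hzero := htot.unique hstat'
    have hs : ∑ s, D s * (v s b * u a) = (∑ s, D s * v s b) * u a := by
      rw [Finset.sum_mul]
      exact Finset.sum_congr rfl fun s _ => by ring
    rw [hs] at hzero
    linarith [hzero]
  -- conclude rank ≤ 1
  apply rank_le_one_of_factor (W k) u (fun b => -(∑ s, D s * v s b) / (2 * mu k))
  intro a b
  have h := key a b
  field_simp
  linarith [h]
end

section
/- Let {x_i}_{i∈I} and {x_j}_{j∈J} be finite sets in ℝ^{n_0} separable by a hyperplane through the origin, and define the deep linear cross-entropy loss ℓ(W_1, …, W_L) = Σ_{i∈I} log(1 + exp(W_L ⋯ W_1 x_i)) + Σ_{j∈J} log(1 + exp(−W_L ⋯ W_1 x_j)), where W_k ∈ ℝ^{n_k × n_{k−1}} and n_L = 1. Suppose (W_1(t), …, W_L(t)) solves the gradient flow dW_k/dt = −∂ℓ/∂W_k for all k ∈ [L] and converges in direction to (W̄_1, …, W̄_L): there exists h : [0, ∞) → (0, ∞) with h(t) → ∞ such that ‖W_k(t) − h(t) W̄_k‖_F / h(t) → 0 for every k, where each W̄_k has bounded entries and W̄_k ≠ 0 for at least one k. Then rank(W̄_k)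 ≤ 1 for every k ∈ [L]. -/
open Filter Topology

def dirB (n : ℕ → ℕ) (W : ∀ k : ℕ, Matrix (Fin (n (k + 1))) (Fin (n k)) ℝ)
    (k : ℕ) (a : Fin (n (k + 1))) : ∀ m : ℕ, Fin (n m) → ℝ
  | 0 => 0
  | m + 1 =>
    if h : m = k then fun i => (Pi.single a (1:ℝ) : Fin (n (k+1)) → ℝ) (Fin.cast (by rw [h]) i)
    else (W m).mulVec (dirB n W k a m)

lemma dirB_of_le (n W k) (a : Fin (n (k+1))) : ∀ m, m ≤ k → dirB n W k a m = 0
  | 0, _ => by simp [dirB]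
  | m + 1, hm => by
    have hne : m ≠ k := by omega
    simp [dirB, hne, dirB_of_le n W k a m (by omega)]

lemma dirB_succ_self (n W k) (a : Fin (n (k+1))) :
    dirB n W k a (k+1) = Pi.single a 1 := by
  simp only [dirB]
  rw [dif_pos trivial]
  funext i
  rfl

lemma dirB_succ_ne (n W k) (a : Fin (n (k+1))) (m : ℕ) (h : m ≠ k) :
    dirB n W k a (m+1) = (W m).mulVec (dirB n W k a m) := by
  simp only [dirB, dif_neg h]

lemma fwd_update (n : ℕ → ℕ) (W : ∀ k : ℕ, Matrix (Fin (n (k + 1))) (Fin (n k)) ℝ)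
    (k : ℕ) (a : Fin (n (k+1))) (b : Fin (n k)) (x : Fin (n 0) → ℝ) (ε : ℝ) :
    ∀ m, fwd n (Function.update W k (W k + ε • Matrix.single a b 1)) x m
      = fwd n W x m + (ε * fwd n W x k b) • dirB n W k a m
  | 0 => by simp [fwd, dirB]
  | m + 1 => by
    by_cases hm : m = k
    · subst hm
      show (Function.update W m (W m + ε • Matrix.single a b 1) m).mulVec _ = _
      rw [Function.update_self, fwd_update n W m a b x ε m,
        dirB_of_le n W m a m le_rfl, dirB_succ_self]
      simp only [smul_zero, add_zero, Matrix.add_mulVec, Matrix.smul_mulVec]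
      congr 1
      funext i
      simp [Matrix.mulVec, dotProduct, Matrix.single, Pi.single_apply,
        ite_and, Finset.mul_sum, Finset.sum_ite_eq, eq_comm, mul_comm]
    · show (Function.update W k _ m).mulVec _ = _
      rw [Function.update_of_ne hm, fwd_update n W k a b x ε m, dirB_succ_ne n W k a m hm]
      show (W m).mulVec _ = (W m).mulVec _ + _
      rw [Matrix.mulVec_add, Matrix.mulVec_smul]

lemma dirB_step (n : ℕ → ℕ) (W : ∀ k : ℕ, Matrix (Fin (n (k + 1))) (Fin (n k)) ℝ)
    (k : ℕ) (c : Fin (n (k+1))) :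
    ∀ m, k + 2 ≤ m → ∀ i, dirB n W k c m i = ∑ a, W (k+1) a c * dirB n W (k+1) a m i := by
  intro m
  induction m with
  | zero => omega
  | succ m ih =>
    intro hm i
    by_cases hm2 : m = k + 1
    · subst hm2
      rw [dirB_succ_ne n W k c (k+1) (by omega), dirB_succ_self]
      have hrw2 : ∀ a : Fin (n (k+1+1)), dirB n W (k+1) a (k+1+1) i = (Pi.single a (1:ℝ) : Fin (n (k+1+1)) → ℝ) i := by
        intro a; rw [dirB_succ_self]
      simp only [hrw2]
      simp [Matrix.mulVec, dotProduct, Pi.single_apply, mul_comm, eq_comm]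
    · have hk1 : m ≠ k := by omega
      rw [dirB_succ_ne n W k c m hk1]
      have hrw2 : ∀ a : Fin (n (k+1+1)), dirB n W (k+1) a (m+1) i
          = ∑ j, W m i j * dirB n W (k+1) a m j := by
        intro a; rw [dirB_succ_ne n W (k+1) a m hm2]; rfl
      simp only [hrw2]
      have hih := ih (by omega)
      simp only [Matrix.mulVec, dotProduct, hih, Finset.mul_sum]
      rw [Finset.sum_comm]
      apply Finset.sum_congr rfl; intro a _
      apply Finset.sum_congr rfl; intro j _
      ring

noncomputable def sig (p : ℝ) : ℝ := Real.exp p / (1 + Real.exp p)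

lemma hd_log (p q : ℝ) :
    HasDerivAt (fun ε : ℝ => Real.log (1 + Real.exp (p + ε * q))) (sig p * q) 0 := by
  have h1 : HasDerivAt (fun ε : ℝ => p + ε * q) q 0 := by
    simpa using ((hasDerivAt_id (0:ℝ)).mul_const q).const_add p
  have h2 := (h1.exp.const_add 1)
  have h3 := h2.log (by positivity)
  simp only [zero_mul, add_zero] at h3
  convert h3 using 1
  simp [sig]
  ring

lemma hd_log_neg (p q : ℝ) :
    HasDerivAt (fun ε : ℝ => Real.log (1 + Real.exp (-(p + ε * q)))) (sig (-p) * (-q)) 0 := by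
  have heq : (fun ε : ℝ => Real.log (1 + Real.exp (-(p + ε * q))))
      = (fun ε : ℝ => Real.log (1 + Real.exp (-p + ε * -q))) := by
    funext ε; ring_nf
  rw [heq]; exact hd_log (-p) (-q)

lemma loss_deriv {ι κ : Type*} [Fintype ι] [Fintype κ] (L : ℕ)
    (n : ℕ → ℕ) (xI : ι → Fin (n 0) → ℝ) (xJ : κ → Fin (n 0) → ℝ)
    (loss : (∀ k : ℕ, Matrix (Fin (n (k + 1))) (Fin (n k)) ℝ) → ℝ)
    (hloss : ∀ Wt, loss Wt =
      (∑ i, Real.log (1 + Real.exp (∑ a, fwd n Wt (xI i) L a))) +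
        ∑ j, Real.log (1 + Real.exp (-(∑ a, fwd n Wt (xJ j) L a))))
    (W : ∀ k : ℕ, Matrix (Fin (n (k + 1))) (Fin (n k)) ℝ)
    (k : ℕ) (a : Fin (n (k+1))) (b : Fin (n k)) :
    deriv (fun ε : ℝ =>
        loss (Function.update W k (W k + ε • Matrix.single a b 1))) 0
      = (∑ i, sig (∑ o, fwd n W (xI i) L o)
            * ((∑ o, dirB n W k a L o) * fwd n W (xI i) k b))
        - ∑ j, sig (-(∑ o, fwd n W (xJ j) L o))
            * ((∑ o, dirB n W k a L o) * fwd n W (xJ j) k b) := by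
  set U : ℝ := ∑ o, dirB n W k a L o with hU
  have hfun : (fun ε : ℝ =>
      loss (Function.update W k (W k + ε • Matrix.single a b 1)))
      = fun ε : ℝ =>
        (∑ i, Real.log (1 + Real.exp ((∑ o, fwd n W (xI i) L o)
            + ε * (fwd n W (xI i) k b * U))))
        + ∑ j, Real.log (1 + Real.exp (-((∑ o, fwd n W (xJ j) L o)
            + ε * (fwd n W (xJ j) k b * U)))) := by
    funext ε
    rw [hloss]
    congr 1
    · apply Finset.sum_congr rfl; intro i _
      congr 1
      rw [fwd_update n W k a b (xI i) ε L]
      simp [Finset.sum_add_distrib, Finset.mul_sum, hU, mul_assoc]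
    · apply Finset.sum_congr rfl; intro j _
      congr 2
      rw [fwd_update n W k a b (xJ j) ε L]
      simp [Finset.sum_add_distrib, Finset.mul_sum, hU, mul_assoc]
  rw [hfun]
  have hd : HasDerivAt (fun ε : ℝ =>
        (∑ i, Real.log (1 + Real.exp ((∑ o, fwd n W (xI i) L o)
            + ε * (fwd n W (xI i) k b * U))))
        + ∑ j, Real.log (1 + Real.exp (-((∑ o, fwd n W (xJ j) L o)
            + ε * (fwd n W (xJ j) k b * U)))))
      ((∑ i, sig (∑ o, fwd n W (xI i) L o) * (fwd n W (xI i) k b * U))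
        + ∑ j, sig (-(∑ o, fwd n W (xJ j) L o)) * (-(fwd n W (xJ j) k b * U))) 0 := by
    apply HasDerivAt.add
    · exact HasDerivAt.fun_sum fun i _ => hd_log _ _
    · exact HasDerivAt.fun_sum fun j _ => hd_log_neg _ _
  rw [hd.deriv]
  rw [sub_eq_add_neg, ← Finset.sum_neg_distrib]
  congr 1
  · apply Finset.sum_congr rfl; intro i _; ring
  · apply Finset.sum_congr rfl; intro j _; ring

noncomputable def uvec (n : ℕ → ℕ) (W : ∀ k : ℕ, Matrix (Fin (n (k + 1))) (Fin (n k)) ℝ)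
    (k L : ℕ) (a : Fin (n (k+1))) : ℝ := ∑ o, dirB n W k a L o

noncomputable def rvec {ι κ : Type*} [Fintype ι] [Fintype κ] (n : ℕ → ℕ)
    (xI : ι → Fin (n 0) → ℝ) (xJ : κ → Fin (n 0) → ℝ)
    (W : ∀ k : ℕ, Matrix (Fin (n (k + 1))) (Fin (n k)) ℝ) (L k : ℕ) (b : Fin (n k)) : ℝ :=
  (∑ i, sig (∑ o, fwd n W (xI i) L o) * fwd n W (xI i) k b)
    - ∑ j, sig (-(∑ o, fwd n W (xJ j) L o)) * fwd n W (xJ j) k b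

lemma rvec_succ {ι κ : Type*} [Fintype ι] [Fintype κ] (n : ℕ → ℕ)
    (xI : ι → Fin (n 0) → ℝ) (xJ : κ → Fin (n 0) → ℝ)
    (W : ∀ k : ℕ, Matrix (Fin (n (k + 1))) (Fin (n k)) ℝ) (L k : ℕ) (c : Fin (n (k+1))) :
    rvec n xI xJ W L (k+1) c = ∑ a, W k c a * rvec n xI xJ W L k a := by
  simp only [rvec, mul_sub, Finset.sum_sub_distrib]
  congr 1
  · show (∑ i, sig _ * (W k).mulVec (fwd n W (xI i) k) c) = _
    simp only [Matrix.mulVec, dotProduct, Finset.mul_sum]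
    rw [Finset.sum_comm]
    exact Finset.sum_congr rfl fun a _ => Finset.sum_congr rfl fun i _ => by ring
  · show (∑ j, sig _ * (W k).mulVec (fwd n W (xJ j) k) c) = _
    simp only [Matrix.mulVec, dotProduct, Finset.mul_sum]
    rw [Finset.sum_comm]
    exact Finset.sum_congr rfl fun a _ => Finset.sum_congr rfl fun j _ => by ring

lemma uvec_succ (n : ℕ → ℕ) (W : ∀ k : ℕ, Matrix (Fin (n (k + 1))) (Fin (n k)) ℝ)
    (k L : ℕ) (hk : k + 2 ≤ L) (c : Fin (n (k+1))) :
    uvec n W k L c = ∑ a, W (k+1) a c * uvec n W (k+1) L a := by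
  simp only [uvec]
  have := dirB_step n W k c L hk
  simp only [this, Finset.mul_sum]
  exact Finset.sum_comm

/-- deterministic content of Theorem 5.  If the gradient flow of the
deep linear cross-entropy loss on data separable by a hyperplane through the origin
converges in direction to `(W̄₁, …, W̄_L)` (normalization `h(t) → ∞`,
`‖W_k(t) − h(t) W̄_k‖_F / h(t) → 0`, some `W̄_k ≠ 0`), then every `W̄_k` has rank at
most 1. -/
theorem stmt11 {ι κ : Type*} [Fintype ι] [Fintype κ] (L : ℕ) (hL : 1 ≤ L)
    (n : ℕ → ℕ) (hnL : n L = 1)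
    (xI : ι → Fin (n 0) → ℝ) (xJ : κ → Fin (n 0) → ℝ)
    -- separable by a hyperplane through the origin
    (hsep : ∃ v : Fin (n 0) → ℝ,
      (∀ i, (∑ a, v a * xI i a) < 0) ∧ (∀ j, 0 < ∑ a, v a * xJ j a))
    (loss : (∀ k : ℕ, Matrix (Fin (n (k + 1))) (Fin (n k)) ℝ) → ℝ)
    (hloss : ∀ Wt, loss Wt =
      (∑ i, Real.log (1 + Real.exp (∑ a, fwd n Wt (xI i) L a))) +
        ∑ j, Real.log (1 + Real.exp (-(∑ a, fwd n Wt (xJ j) L a))))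
    (W : ℝ → ∀ k : ℕ, Matrix (Fin (n (k + 1))) (Fin (n k)) ℝ)
    -- gradient flow `dW_k/dt = −∂ℓ/∂W_k`
    (hflow : ∀ t ≥ (0 : ℝ), ∀ k < L, ∀ (a : Fin (n (k + 1))) (b : Fin (n k)),
      HasDerivAt (fun τ => W τ k a b)
        (-(deriv (fun ε : ℝ =>
            loss (Function.update (W t) k (W t k + ε • Matrix.single a b 1))) 0)) t)
    -- convergence in direction
    (h : ℝ → ℝ) (hhpos : ∀ t, 0 < h t) (hhtop : Tendsto h atTop atTop)
    (Wb : ∀ k : ℕ, Matrix (Fin (n (k + 1))) (Fin (n k)) ℝ)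
    (hWbne : ∃ k < L, Wb k ≠ 0)
    (hdir : ∀ k < L, Tendsto
      (fun t => Real.sqrt (∑ a, ∑ b, (W t k a b - h t * Wb k a b) ^ 2) / h t)
      atTop (𝓝 (0 : ℝ))) :
    ∀ k < L, (Wb k).rank ≤ 1 := by
  -- Step 1: the flow in outer-product form
  have hflow' : ∀ t ≥ (0:ℝ), ∀ k < L, ∀ (a : Fin (n (k+1))) (b : Fin (n k)),
      HasDerivAt (fun τ => W τ k a b)
        (-(uvec n (W t) k L a * rvec n xI xJ (W t) L k b)) t := by
    intro t ht k hk a b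
    have h0 := hflow t ht k hk a b
    rw [loss_deriv L n xI xJ loss hloss (W t) k a b] at h0
    have heq : uvec n (W t) k L a * rvec n xI xJ (W t) L k b
        = (∑ i, sig (∑ o, fwd n (W t) (xI i) L o)
            * ((∑ o, dirB n (W t) k a L o) * fwd n (W t) (xI i) k b))
          - ∑ j, sig (-(∑ o, fwd n (W t) (xJ j) L o))
            * ((∑ o, dirB n (W t) k a L o) * fwd n (W t) (xJ j) k b) := by
      simp only [uvec, rvec, mul_sub, Finset.mul_sum]
      congr 1 <;> exact Finset.sum_congr rfl fun _ _ => by ring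
    rw [heq]
    exact h0
  -- Step 2: balancedness (the conserved quantities)
  have key : ∀ k, k + 1 < L → ∀ (b c : Fin (n (k+1))), ∀ t ≥ (0:ℝ),
      ((∑ a, W t (k+1) a b * W t (k+1) a c) - (∑ a, W t k b a * W t k c a))
        = ((∑ a, W 0 (k+1) a b * W 0 (k+1) a c) - (∑ a, W 0 k b a * W 0 k c a)) := by
    intro k hk b c t ht
    have hk' : k < L := by omega
    have hk2 : k + 2 ≤ L := by omega
    set f : ℝ → ℝ := fun τ =>
      (∑ a, W τ (k+1) a b * W τ (k+1) a c) - (∑ a, W τ k b a * W τ k c a) with hf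
    have hder : ∀ τ ≥ (0:ℝ), HasDerivAt f 0 τ := by
      intro τ hτ
      have hA : HasDerivAt (fun τ => ∑ a, W τ (k+1) a b * W τ (k+1) a c)
          (∑ a, (-(uvec n (W τ) (k+1) L a * rvec n xI xJ (W τ) L (k+1) b) * W τ (k+1) a c
            + W τ (k+1) a b * -(uvec n (W τ) (k+1) L a * rvec n xI xJ (W τ) L (k+1) c))) τ :=
        HasDerivAt.fun_sum fun a _ =>
          (hflow' τ hτ (k+1) hk a b).mul (hflow' τ hτ (k+1) hk a c)
      have hB : HasDerivAt (fun τ => ∑ a, W τ k b a * W τ k c a)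
          (∑ a, (-(uvec n (W τ) k L b * rvec n xI xJ (W τ) L k a) * W τ k c a
            + W τ k b a * -(uvec n (W τ) k L c * rvec n xI xJ (W τ) L k a))) τ :=
        HasDerivAt.fun_sum fun a _ =>
          (hflow' τ hτ k hk' b a).mul (hflow' τ hτ k hk' c a)
      have hAB := hA.sub hB
      have e1 : (∑ a, (-(uvec n (W τ) (k+1) L a * rvec n xI xJ (W τ) L (k+1) b) * W τ (k+1) a c
            + W τ (k+1) a b * -(uvec n (W τ) (k+1) L a * rvec n xI xJ (W τ) L (k+1) c)))
          = -(rvec n xI xJ (W τ) L (k+1) b * uvec n (W τ) k L c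
              + uvec n (W τ) k L b * rvec n xI xJ (W τ) L (k+1) c) := by
        rw [uvec_succ n (W τ) k L hk2 c, uvec_succ n (W τ) k L hk2 b]
        simp only [Finset.mul_sum, Finset.sum_mul, neg_add, ← Finset.sum_neg_distrib,
          ← Finset.sum_add_distrib]
        exact Finset.sum_congr rfl fun a _ => by ring
      have e2 : (∑ a, (-(uvec n (W τ) k L b * rvec n xI xJ (W τ) L k a) * W τ k c a
            + W τ k b a * -(uvec n (W τ) k L c * rvec n xI xJ (W τ) L k a)))
          = -(uvec n (W τ) k L b * rvec n xI xJ (W τ) L (k+1) c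
              + rvec n xI xJ (W τ) L (k+1) b * uvec n (W τ) k L c) := by
        rw [rvec_succ n xI xJ (W τ) L k c, rvec_succ n xI xJ (W τ) L k b]
        simp only [Finset.mul_sum, Finset.sum_mul, neg_add, ← Finset.sum_neg_distrib,
          ← Finset.sum_add_distrib]
        exact Finset.sum_congr rfl fun a _ => by ring
      rw [e1, e2] at hAB
      have : -(rvec n xI xJ (W τ) L (k+1) b * uvec n (W τ) k L c
              + uvec n (W τ) k L b * rvec n xI xJ (W τ) L (k+1) c)
          - -(uvec n (W τ) k L b * rvec n xI xJ (W τ) L (k+1) c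
              + rvec n xI xJ (W τ) L (k+1) b * uvec n (W τ) k L c) = 0 := by ring
      rw [this] at hAB
      exact hAB
    have hcont : ContinuousOn f (Set.Icc 0 t) := fun τ hτ =>
      (hder τ hτ.1).continuousAt.continuousWithinAt
    exact constant_of_has_deriv_right_zero hcont
      (fun τ hτ => (hder τ hτ.1).hasDerivWithinAt) t (Set.right_mem_Icc.mpr ht)
  -- Step 3: entrywise directional convergence
  have hWlim : ∀ k, k < L → ∀ (a : Fin (n (k+1))) (b : Fin (n k)),
      Tendsto (fun t => W t k a b / h t) atTop (𝓝 (Wb k a b)) := by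
    intro k hk a b
    have h1 : Tendsto (fun t => W t k a b / h t - Wb k a b) atTop (𝓝 0) := by
      apply squeeze_zero_norm
        (a := fun t => Real.sqrt (∑ a', ∑ b', (W t k a' b' - h t * Wb k a' b') ^ 2) / h t)
        _ (hdir k hk)
      intro t
      have hpos := hhpos t
      have heq : W t k a b / h t - Wb k a b = (W t k a b - h t * Wb k a b) / h t := by
        field_simp
      rw [Real.norm_eq_abs, heq, abs_div, abs_of_pos hpos]
      have hx : |W t k a b - h t * Wb k a b|
          ≤ Real.sqrt (∑ a', ∑ b', (W t k a' b' - h t * Wb k a' b') ^ 2) := by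
        rw [← Real.sqrt_sq_eq_abs]
        apply Real.sqrt_le_sqrt
        calc (W t k a b - h t * Wb k a b) ^ 2
            ≤ ∑ b', (W t k a b' - h t * Wb k a b') ^ 2 :=
              Finset.single_le_sum
                (f := fun b' => (W t k a b' - h t * Wb k a b') ^ 2)
                (fun _ _ => sq_nonneg _) (Finset.mem_univ b)
          _ ≤ ∑ a', ∑ b', (W t k a' b' - h t * Wb k a' b') ^ 2 :=
              Finset.single_le_sum
                (f := fun a' => ∑ b', (W t k a' b' - h t * Wb k a' b') ^ 2)
                (fun _ _ => Finset.sum_nonneg fun _ _ => sq_nonneg _) (Finset.mem_univ a)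
      exact (div_le_div_iff_of_pos_right hpos).mpr hx
    have h2 := h1.add (tendsto_const_nhds (x := Wb k a b) (f := atTop))
    simpa using h2
  -- Step 4: the conserved quantity vanishes in the limit
  have hms : ∀ k, k + 1 < L → ∀ (b c : Fin (n (k+1))),
      (∑ a, Wb (k+1) a b * Wb (k+1) a c) = ∑ a, Wb k b a * Wb k c a := by
    intro k hk b c
    have hk' : k < L := by omega
    have hA : Tendsto (fun t =>
        ((∑ a, W t (k+1) a b * W t (k+1) a c) - ∑ a, W t k b a * W t k c a) / (h t) ^ 2)
        atTop (𝓝 ((∑ a, Wb (k+1) a b * Wb (k+1) a c) - ∑ a, Wb k b a * Wb k c a)) := by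
      have hs1 : Tendsto (fun t => ∑ a, (W t (k+1) a b / h t) * (W t (k+1) a c / h t))
          atTop (𝓝 (∑ a, Wb (k+1) a b * Wb (k+1) a c)) :=
        tendsto_finset_sum _ fun a _ => (hWlim (k+1) hk a b).mul (hWlim (k+1) hk a c)
      have hs2 : Tendsto (fun t => ∑ a, (W t k b a / h t) * (W t k c a / h t))
          atTop (𝓝 (∑ a, Wb k b a * Wb k c a)) :=
        tendsto_finset_sum _ fun a _ => (hWlim k hk' b a).mul (hWlim k hk' c a)
      have := hs1.sub hs2
      refine this.congr fun t => ?_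
      have hpos := (hhpos t).ne'
      rw [sub_div, Finset.sum_div, Finset.sum_div]
      congr 1 <;> (apply Finset.sum_congr rfl; intro a _; rw [div_mul_div_comm, sq])
    have hB : Tendsto (fun t =>
        ((∑ a, W t (k+1) a b * W t (k+1) a c) - ∑ a, W t k b a * W t k c a) / (h t) ^ 2)
        atTop (𝓝 0) := by
      have hC : Tendsto (fun t =>
          ((∑ a, W 0 (k+1) a b * W 0 (k+1) a c) - ∑ a, W 0 k b a * W 0 k c a) / (h t) ^ 2)
          atTop (𝓝 0) := by
        apply Tendsto.div_atTop tendsto_const_nhds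
        have h2 := hhtop.atTop_mul_atTop₀ hhtop
        refine h2.congr fun t => ?_
        ring
      refine Tendsto.congr' ?_ hC
      filter_upwards [eventually_ge_atTop (0:ℝ)] with t ht
      rw [key k hk b c t ht]
    have := tendsto_nhds_unique hA hB
    linarith [this]
  -- Step 5: rank bound by downward induction
  have hrank : ∀ m : ℕ, ∀ k, k < L → L - k = m + 1 → (Wb k).rank ≤ 1 := by
    intro m
    induction m with
    | zero =>
      intro k hk hm
      have hkL : k + 1 = L := by omega
      have hcard : n (k + 1) = 1 := by rw [hkL, hnL]
      calc (Wb k).rank ≤ Fintype.card (Fin (n (k+1))) := Matrix.rank_le_card_height _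
        _ = 1 := by rw [Fintype.card_fin, hcard]
    | succ m ih =>
      intro k hk hm
      have hk1 : k + 1 < L := by omega
      have hmat : (Wb (k+1)).transpose * Wb (k+1) = Wb k * (Wb k).transpose := by
        ext b c
        rw [Matrix.mul_apply, Matrix.mul_apply]
        simpa [Matrix.transpose_apply] using hms k hk1 b c
      calc (Wb k).rank = (Wb k * (Wb k).transpose).rank := (Matrix.rank_self_mul_transpose _).symm
        _ = ((Wb (k+1)).transpose * Wb (k+1)).rank := by rw [hmat]
        _ ≤ (Wb (k+1)).rank := Matrix.rank_mul_le_right _ _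
        _ ≤ 1 := ih (k+1) hk1 (by omega)
  intro k hk
  exact hrank (L - k - 1) k hk (by omega)
end

section
/- Let p, q ∈ [1, ∞] with 1/p + 1/q = 1, let w, x ∈ ℝⁿ, y ∈ ℝ and ε ≥ 0. Then min_{‖d‖_q ≤ ε} wᵀ(x + d) = wᵀ x − ε ‖w‖_p and max_{‖d‖_q ≤ ε} wᵀ(x + d) = wᵀ x + ε ‖w‖_p, and consequently (1/2) ( y − min_{‖d‖_q ≤ ε} wᵀ(x + d) )² + (1/2) ( y − max_{‖d‖_q ≤ ε} wᵀ(x + d) )² = (y − wᵀ x)² + ε² ‖w‖_p². -/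
open scoped ENNReal

/-- The `ℓ^p` norm on `Fin n → ℝ`, for `p ∈ [1, ∞]` (via the `PiLp` norm). -/
noncomputable def pnorm (p : ℝ≥0∞) {n : ℕ} (v : Fin n → ℝ) : ℝ :=
  ‖(WithLp.equiv p (Fin n → ℝ)).symm v‖

lemma pnorm_eq_sum {n : ℕ} {p : ℝ≥0∞} (hp : 0 < p.toReal) (v : Fin n → ℝ) :
    pnorm p v = (∑ j, |v j| ^ p.toReal) ^ (1 / p.toReal) := by
  rw [pnorm, PiLp.norm_eq_sum hp]
  simp [Real.norm_eq_abs, PiLp.toLp_apply]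

lemma pnorm_top {n : ℕ} (v : Fin n → ℝ) : pnorm ∞ v = ⨆ j, |v j| := by
  rw [pnorm, PiLp.norm_eq_ciSup]
  simp [Real.norm_eq_abs, PiLp.toLp_apply]

lemma pnorm_nonneg {n : ℕ} (p : ℝ≥0∞) (v : Fin n → ℝ) : 0 ≤ pnorm p v := by
  rcases eq_or_ne p ∞ with rfl | hp
  · rw [pnorm_top]; exact Real.iSup_nonneg fun j => abs_nonneg _
  · rcases eq_or_ne p 0 with rfl | hp0
    · rw [pnorm]; simp [norm]
    · rw [pnorm_eq_sum (ENNReal.toReal_pos hp0 hp)]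
      positivity

lemma pnorm_neg {n : ℕ} (p : ℝ≥0∞) (v : Fin n → ℝ) : pnorm p (-v) = pnorm p v := by
  rcases eq_or_ne p ∞ with rfl | hp
  · simp [pnorm_top]
  · rcases eq_or_ne p 0 with rfl | hp0
    · rw [pnorm, pnorm]; simp [norm]
    · simp [pnorm_eq_sum (ENNReal.toReal_pos hp0 hp)]

lemma key_finite {n : ℕ} {pr qr : ℝ} (hc : pr.HolderConjugate qr)
    {p q : ℝ≥0∞} (hp : p.toReal = pr) (hq : q.toReal = qr)
    (w : Fin n → ℝ) (ε : ℝ) (hε : 0 ≤ ε) :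
    (∀ d : Fin n → ℝ, pnorm q d ≤ ε → |∑ j, w j * d j| ≤ ε * pnorm p w) ∧
    (∃ d : Fin n → ℝ, pnorm q d ≤ ε ∧ ∑ j, w j * d j = ε * pnorm p w) := by
  have hprpos : 0 < pr := hc.pos
  have hqrpos : 0 < qr := hc.symm.pos
  have hNp : pnorm p w = (∑ j, |w j| ^ pr) ^ (1 / pr) := by
    rw [pnorm_eq_sum (by rw [hp]; exact hprpos), hp]
  have hNq : ∀ d : Fin n → ℝ, pnorm q d = (∑ j, |d j| ^ qr) ^ (1 / qr) := fun d => by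
    rw [pnorm_eq_sum (by rw [hq]; exact hqrpos), hq]
  constructor
  · intro d hd
    have H := Real.inner_le_Lp_mul_Lq (s := Finset.univ)
      (f := fun j => |w j|) (g := fun j => |d j|) hc
    simp only [abs_abs] at H
    calc |∑ j, w j * d j| ≤ ∑ j, |w j * d j| := Finset.abs_sum_le_sum_abs _ _
      _ = ∑ j, |w j| * |d j| := by simp [abs_mul]
      _ ≤ pnorm p w * pnorm q d := by rw [hNp, hNq]; exact H
      _ ≤ pnorm p w * ε := mul_le_mul_of_nonneg_left hd (by rw [hNp]; positivity)
      _ = ε * pnorm p w := mul_comm _ _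
  · by_cases hw : w = 0
    · refine ⟨0, ?_, ?_⟩
      · rw [hNq]
        rw [show (∑ j, |(0 : Fin n → ℝ) j| ^ qr) = 0 by
          simp [Real.zero_rpow hqrpos.ne']]
        rw [Real.zero_rpow (by positivity)]
        exact hε
      · subst hw
        rw [hNp]
        rw [show (∑ j, |(0 : Fin n → ℝ) j| ^ pr) = 0 by
          simp [Real.zero_rpow hprpos.ne']]
        rw [Real.zero_rpow (by positivity : (1:ℝ)/pr ≠ 0)]
        simp
    · set S : ℝ := ∑ j, |w j| ^ pr with hS
      have hSpos : 0 < S := by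
        obtain ⟨j, hj⟩ := Function.ne_iff.1 hw
        refine Finset.sum_pos' (fun i _ => by positivity) ⟨j, Finset.mem_univ j, ?_⟩
        have : 0 < |w j| := abs_pos.2 hj
        positivity
      set N : ℝ := S ^ (1 / pr) with hNdef
      have hNpos : 0 < N := Real.rpow_pos_of_pos hSpos _
      have hSN : S = N ^ pr := by
        rw [hNdef, ← Real.rpow_mul hSpos.le, one_div, inv_mul_cancel₀ hprpos.ne', Real.rpow_one]
      set c : ℝ := ε / N ^ (pr - 1) with hc'
      have hcnn : 0 ≤ c := by positivity
      refine ⟨fun j => c * (|w j| ^ (pr - 2) * w j), ?_, ?_⟩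
      · -- q-norm of d equals ε
        have habs : ∀ j, |c * (|w j| ^ (pr - 2) * w j)| = c * |w j| ^ (pr - 1) := by
          intro j
          rcases eq_or_ne (w j) 0 with h0 | h0
          · simp [h0, Real.zero_rpow (sub_ne_zero.2 hc.lt.ne')]
          · have hpos : 0 < |w j| := abs_pos.2 h0
            rw [abs_mul, abs_of_nonneg hcnn, abs_mul,
              abs_of_nonneg (Real.rpow_nonneg (abs_nonneg _) _),
              ← Real.rpow_add_one hpos.ne']
            rw [show pr - 2 + 1 = pr - 1 by ring]
        have hsumq : (∑ j, |c * (|w j| ^ (pr - 2) * w j)| ^ qr) = c ^ qr * N ^ pr := by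
          rw [← hSN, hS, Finset.mul_sum]
          refine Finset.sum_congr rfl fun j _ => ?_
          rw [habs j, Real.mul_rpow hcnn (Real.rpow_nonneg (abs_nonneg _) _),
            ← Real.rpow_mul (abs_nonneg _), hc.sub_one_mul_conj]
        rw [hNq, hsumq,
          Real.mul_rpow (Real.rpow_nonneg hcnn _) (Real.rpow_nonneg hNpos.le _),
          ← Real.rpow_mul hcnn, ← Real.rpow_mul hNpos.le,
          mul_one_div_cancel hqrpos.ne', Real.rpow_one, mul_one_div, hc.div_conj_eq_sub_one,
          hc', div_mul_cancel₀ _ (Real.rpow_pos_of_pos hNpos _).ne']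
      · -- the sum equals ε * N
        have hterm : ∀ j, w j * (c * (|w j| ^ (pr - 2) * w j)) = c * |w j| ^ pr := by
          intro j
          rcases eq_or_ne (w j) 0 with h0 | h0
          · simp [h0, Real.zero_rpow hprpos.ne']
          · have hpos : 0 < |w j| := abs_pos.2 h0
            have hsq : w j * w j = |w j| ^ (2:ℝ) := by
              rw [show (2:ℝ) = ((2:ℕ):ℝ) by norm_num, Real.rpow_natCast, sq_abs, sq]
            calc w j * (c * (|w j| ^ (pr - 2) * w j))
                = c * (|w j| ^ (pr - 2) * (w j * w j)) := by ring
              _ = c * (|w j| ^ (pr - 2) * |w j| ^ (2:ℝ)) := by rw [hsq]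
              _ = c * |w j| ^ pr := by
                  rw [← Real.rpow_add hpos]; norm_num
        have hdiv : N ^ pr / N ^ (pr - 1) = N := by
          rw [← Real.rpow_sub hNpos]
          norm_num
        calc (∑ j, w j * (c * (|w j| ^ (pr - 2) * w j)))
            = ∑ j, c * |w j| ^ pr := Finset.sum_congr rfl fun j _ => hterm j
          _ = c * S := by rw [hS, Finset.mul_sum]
          _ = ε * pnorm p w := by
              rw [hSN, hc', div_mul_eq_mul_div, mul_div_assoc, hdiv, hNp]

-- Case p = 1, q = ∞
lemma key_one_top {n : ℕ} (w : Fin n → ℝ) (ε : ℝ) (hε : 0 ≤ ε) :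
    (∀ d : Fin n → ℝ, pnorm ∞ d ≤ ε → |∑ j, w j * d j| ≤ ε * pnorm 1 w) ∧
    (∃ d : Fin n → ℝ, pnorm ∞ d ≤ ε ∧ ∑ j, w j * d j = ε * pnorm 1 w) := by
  have hN : pnorm 1 w = ∑ j, |w j| := by
    rw [pnorm_eq_sum (by simp)]; simp
  constructor
  · intro d hd
    have hdj : ∀ j, |d j| ≤ ε := fun j => by
      refine le_trans ?_ hd
      rw [pnorm_top]
      exact le_ciSup (f := fun j => |d j|) (Set.Finite.bddAbove (Set.finite_range _)) j
    calc |∑ j, w j * d j| ≤ ∑ j, |w j * d j| := Finset.abs_sum_le_sum_abs _ _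
      _ ≤ ∑ j, |w j| * ε := by
          refine Finset.sum_le_sum fun j _ => ?_
          rw [abs_mul]
          exact mul_le_mul_of_nonneg_left (hdj j) (abs_nonneg _)
      _ = ε * pnorm 1 w := by rw [hN, Finset.mul_sum]; exact Finset.sum_congr rfl fun j _ => mul_comm _ _
  · refine ⟨fun j => if 0 ≤ w j then ε else -ε, ?_, ?_⟩
    · rw [pnorm_top]
      refine Real.iSup_le (fun j => ?_) hε
      split_ifs <;> simp [abs_of_nonneg hε, hε]
    · rw [hN, Finset.mul_sum]
      refine Finset.sum_congr rfl fun j _ => ?_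
      rcases le_or_gt 0 (w j) with h | h
      · simp [h, abs_of_nonneg h]; ring
      · simp [not_le.2 h, abs_of_neg h]; ring

-- Case p = ∞, q = 1
lemma key_top_one {n : ℕ} (w : Fin n → ℝ) (ε : ℝ) (hε : 0 ≤ ε) :
    (∀ d : Fin n → ℝ, pnorm 1 d ≤ ε → |∑ j, w j * d j| ≤ ε * pnorm ∞ w) ∧
    (∃ d : Fin n → ℝ, pnorm 1 d ≤ ε ∧ ∑ j, w j * d j = ε * pnorm ∞ w) := by
  have hd1 : ∀ d : Fin n → ℝ, pnorm 1 d = ∑ j, |d j| := fun d => by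
    rw [pnorm_eq_sum (by simp)]; simp
  have hwj : ∀ j, |w j| ≤ pnorm ∞ w := fun j => by
    rw [pnorm_top]
    exact le_ciSup (f := fun j => |w j|) (Set.Finite.bddAbove (Set.finite_range _)) j
  constructor
  · intro d hd
    calc |∑ j, w j * d j| ≤ ∑ j, |w j * d j| := Finset.abs_sum_le_sum_abs _ _
      _ ≤ ∑ j, pnorm ∞ w * |d j| := by
          refine Finset.sum_le_sum fun j _ => ?_
          rw [abs_mul]
          exact mul_le_mul_of_nonneg_right (hwj j) (abs_nonneg _)
      _ = pnorm ∞ w * pnorm 1 d := by rw [hd1, Finset.mul_sum]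
      _ ≤ pnorm ∞ w * ε := mul_le_mul_of_nonneg_left hd (pnorm_nonneg _ _)
      _ = ε * pnorm ∞ w := mul_comm _ _
  · rcases Nat.eq_zero_or_pos n with hn | hn
    · subst hn
      refine ⟨0, ?_, ?_⟩
      · rw [hd1]; simpa using hε
      · rw [pnorm_top]
        simp [Real.iSup_of_isEmpty]
    · have : Nonempty (Fin n) := ⟨⟨0, hn⟩⟩
      obtain ⟨j₀, hj₀⟩ := Finite.exists_max fun j => |w j|
      have hNw : pnorm ∞ w = |w j₀| := by
        rw [pnorm_top]
        exact le_antisymm (Real.iSup_le hj₀ (abs_nonneg _))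
          (le_ciSup (f := fun j => |w j|) (Set.Finite.bddAbove (Set.finite_range _)) j₀)
      refine ⟨fun j => if j = j₀ then (if 0 ≤ w j₀ then ε else -ε) else 0, ?_, ?_⟩
      · rw [hd1]
        rw [Finset.sum_eq_single j₀]
        · split_ifs <;> simp [abs_of_nonneg hε, hε]
        · intro b _ hb; simp [hb]
        · simp
      · rw [Finset.sum_eq_single j₀]
        · rw [hNw]
          rcases le_or_gt 0 (w j₀) with h | h
          · simp [h, abs_of_nonneg h]; ring
          · simp [not_le.2 h, abs_of_neg h]; ring
        · intro b _ hb; simp [hb]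
        · simp


lemma sInf_sSup_aux {n : ℕ} (p q : ℝ≥0∞)
    (w x : Fin n → ℝ) (ε : ℝ)
    (hbd : ∀ d : Fin n → ℝ, pnorm q d ≤ ε → |∑ j, w j * d j| ≤ ε * pnorm p w)
    (hatt : ∃ d : Fin n → ℝ, pnorm q d ≤ ε ∧ ∑ j, w j * d j = ε * pnorm p w) :
    sInf {z : ℝ | ∃ d : Fin n → ℝ, pnorm q d ≤ ε ∧ z = ∑ j, w j * (x j + d j)}
        = (∑ j, w j * x j) - ε * pnorm p w ∧
    sSup {z : ℝ | ∃ d : Fin n → ℝ, pnorm q d ≤ ε ∧ z = ∑ j, w j * (x j + d j)}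
        = (∑ j, w j * x j) + ε * pnorm p w := by
  obtain ⟨d₀, hd₀, hd₀sum⟩ := hatt
  set c : ℝ := ∑ j, w j * x j with hcdef
  have hsplit : ∀ d : Fin n → ℝ, (∑ j, w j * (x j + d j)) = c + ∑ j, w j * d j := by
    intro d
    rw [hcdef, ← Finset.sum_add_distrib]
    exact Finset.sum_congr rfl fun j _ => by ring
  set S := {z : ℝ | ∃ d : Fin n → ℝ, pnorm q d ≤ ε ∧ z = ∑ j, w j * (x j + d j)} with hSdef
  have hub : ∀ z ∈ S, z ≤ c + ε * pnorm p w := by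
    rintro z ⟨d, hd, rfl⟩
    rw [hsplit]
    have := (abs_le.1 (hbd d hd)).2
    linarith
  have hlb : ∀ z ∈ S, c - ε * pnorm p w ≤ z := by
    rintro z ⟨d, hd, rfl⟩
    rw [hsplit]
    have := (abs_le.1 (hbd d hd)).1
    linarith
  have hmax : (c + ε * pnorm p w) ∈ S := ⟨d₀, hd₀, by rw [hsplit, hd₀sum]⟩
  have hmin : (c - ε * pnorm p w) ∈ S := by
    refine ⟨-d₀, by rwa [pnorm_neg], ?_⟩
    rw [hsplit]
    have : (∑ j, w j * (-d₀) j) = -∑ j, w j * d₀ j := by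
      rw [← Finset.sum_neg_distrib]
      exact Finset.sum_congr rfl fun j _ => by simp
    rw [this, hd₀sum]
    ring
  constructor
  · exact le_antisymm (csInf_le ⟨c - ε * pnorm p w, hlb⟩ hmin)
      (le_csInf ⟨_, hmax⟩ hlb)
  · exact le_antisymm (csSup_le ⟨_, hmax⟩ hub)
      (le_csSup ⟨c + ε * pnorm p w, hub⟩ hmax)


/-- For conjugate exponents `p, q`, the minimum and maximum of
`wᵀ(x + d)` over the `q`-norm ball `‖d‖_q ≤ ε` are `wᵀx ∓ ε ‖w‖_p`, and consequently the
symmetric two-sided perturbation objective equals `(y − wᵀx)² + ε² ‖w‖_p²`. -/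
theorem stmt14 {n : ℕ} (p q : ℝ≥0∞) (hp : 1 ≤ p) (hq : 1 ≤ q) (hpq : 1 / p + 1 / q = 1)
    (w x : Fin n → ℝ) (y : ℝ) (ε : ℝ) (hε : 0 ≤ ε) :
    sInf {z : ℝ | ∃ d : Fin n → ℝ, pnorm q d ≤ ε ∧ z = ∑ j, w j * (x j + d j)}
        = (∑ j, w j * x j) - ε * pnorm p w ∧
    sSup {z : ℝ | ∃ d : Fin n → ℝ, pnorm q d ≤ ε ∧ z = ∑ j, w j * (x j + d j)}
        = (∑ j, w j * x j) + ε * pnorm p w ∧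
    (1 / 2) * (y - sInf {z : ℝ | ∃ d : Fin n → ℝ, pnorm q d ≤ ε ∧
          z = ∑ j, w j * (x j + d j)}) ^ 2
      + (1 / 2) * (y - sSup {z : ℝ | ∃ d : Fin n → ℝ, pnorm q d ≤ ε ∧
          z = ∑ j, w j * (x j + d j)}) ^ 2
      = (y - ∑ j, w j * x j) ^ 2 + ε ^ 2 * (pnorm p w) ^ 2 := by
  have key : (∀ d : Fin n → ℝ, pnorm q d ≤ ε → |∑ j, w j * d j| ≤ ε * pnorm p w) ∧
      (∃ d : Fin n → ℝ, pnorm q d ≤ ε ∧ ∑ j, w j * d j = ε * pnorm p w) := by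
    by_cases hqtop : q = ∞
    · have hp1 : p = 1 := by
        have h1 : 1 / p = 1 := by simpa [hqtop] using hpq
        rw [one_div, ENNReal.inv_eq_one] at h1
        exact h1
      subst hp1; subst hqtop
      exact key_one_top w ε hε
    · by_cases hptop : p = ∞
      · have hq1 : q = 1 := by
          have h1 : 1 / q = 1 := by simpa [hptop] using hpq
          rw [one_div, ENNReal.inv_eq_one] at h1
          exact h1
        subst hq1; subst hptop
        exact key_top_one w ε hε
      · have hp0 : p ≠ 0 := by intro h; simp [h] at hp
        have hq0 : q ≠ 0 := by intro h; simp [h] at hq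
        have hpne1 : p ≠ 1 := by
          intro h
          rw [h] at hpq
          simp at hpq
          have hq0' : q⁻¹ = 0 :=
            (ENNReal.add_right_inj ENNReal.one_ne_top).1 (by rw [hpq, add_zero]; simp)
          exact hqtop (ENNReal.inv_eq_zero.1 hq0')
        have hpr1 : 1 < p.toReal := by
          rw [← ENNReal.toReal_one]
          exact ENNReal.toReal_strict_mono hptop (lt_of_le_of_ne hp (Ne.symm hpne1))
        have hsum : p.toReal⁻¹ + q.toReal⁻¹ = 1 := by
          have h1 : p⁻¹ ≠ ∞ := by simp [hp0]
          have h2 : q⁻¹ ≠ ∞ := by simp [hq0]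
          have := congrArg ENNReal.toReal hpq
          rwa [one_div, one_div, ENNReal.toReal_add h1 h2, ENNReal.toReal_inv,
            ENNReal.toReal_inv, ENNReal.toReal_one] at this
        exact key_finite (Real.holderConjugate_iff.mpr ⟨hpr1, hsum⟩) rfl rfl w ε hε
  obtain ⟨hInf, hSup⟩ := sInf_sSup_aux p q w x ε key.1 key.2
  refine ⟨hInf, hSup, ?_⟩
  rw [hInf, hSup]
  ring
end
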